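/- arXiv:math/0212063 — 6 statements merged into one kernel-verified Lean document; each statement's English description precedes it below -/
import Mathlib

section
/- If λ is a regular uncountable cardinal and a family S of countable sets of cardinality λ is free (has a transversal), then for every filtration ⟨S_α : α < λ⟩ of S (a continuous increasing chain of subfamilies of cardinality < λ with union S), the set of α < λ such that the quotient family S/S_α is free contains a closed unbounded subset of λ. -/
open Cardinal Set

/-- A family of sets is free if it admits an injective choice function (transversal). -/
def HasTransversal {A : Type*} (S : Set (Set A)) : Prop :=
  ∃ T : Set A → A, Set.InjOn T S ∧ ∀ s ∈ S, T s ∈ s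

/-- The quotient family `S/R = { s \ ⋃R : s ∈ S \ R }`. -/
def quotFam {A : Type*} (S R : Set (Set A)) : Set (Set A) :=
  (fun s => s \ ⋃₀ R) '' (S \ R)

/-- `C` is a closed unbounded subset of the ordinal `o`. -/
def IsClubIn (C : Set Ordinal) (o : Ordinal) : Prop :=
  C ⊆ Set.Iio o ∧ (∀ b < o, ∃ c ∈ C, b < c) ∧
    (∀ b < o, b ≠ 0 → (∀ d < b, ∃ c ∈ C, d < c ∧ c < b) → b ∈ C)

/-- If `λ` is regular uncountable, `S` a family of countable sets with `|S| = λ` which is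
free, then for every filtration `⟨F α : α < λ⟩` of `S`, the set of `α` with `S/F α` free
contains a club of `λ`. -/
theorem stmt0 {A : Type*} (lam : Cardinal) (hreg : lam.IsRegular) (hunc : ℵ₀ < lam)
    (S : Set (Set A)) (hct : ∀ s ∈ S, s.Countable) (hcard : #S = lam)
    (hfree : HasTransversal S) (F : Ordinal → Set (Set A))
    (hmono : ∀ α β : Ordinal, α ≤ β → β < lam.ord → F α ⊆ F β)
    (hsub : ∀ α < lam.ord, F α ⊆ S)
    (hsize : ∀ α < lam.ord, #(F α) < lam)
    (hcont : ∀ α < lam.ord, Order.IsSuccLimit α → F α = ⋃ β : Set.Iio α, F β.1)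
    (hunion : S = ⋃ α : Set.Iio lam.ord, F α.1) :
    ∃ C : Set Ordinal, IsClubIn C lam.ord ∧
      ∀ α ∈ C, HasTransversal (quotFam S (F α)) := by
  classical
  obtain ⟨T, Tinj, Tmem⟩ := hfree
  have hordlim : Order.IsSuccLimit lam.ord := Cardinal.isSuccLimit_ord hreg.aleph0_le
  set C : Set Ordinal := {α | α < lam.ord ∧ ∀ s ∈ S, s ∉ F α → T s ∉ ⋃₀ F α} with hCdef
  -- cardinality of sUnion
  have hsU : ∀ α < lam.ord, #(⋃₀ F α) < lam := by
    intro α hα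
    refine lt_of_le_of_lt (Cardinal.mk_sUnion_le _) ?_
    refine Cardinal.mul_lt_of_lt hreg.aleph0_le (hsize α hα) (lt_of_le_of_lt ?_ hunc)
    rcases isEmpty_or_nonempty (F α) with h | h
    · simp [ciSup_of_empty]
    · refine ciSup_le' fun s => ?_
      have : (s : Set A).Countable := hct s.1 (hsub α hα s.2)
      exact this.le_aleph0
  -- key extension function
  have keyg : ∀ α, α < lam.ord → ∃ γ, α < γ ∧ γ < lam.ord ∧
      ∀ s ∈ S, T s ∈ ⋃₀ F α → s ∈ F γ := by
    intro α hα
    set B : Set (Set A) := {s | s ∈ S ∧ T s ∈ ⋃₀ F α} with hBdef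
    have hBcard : #B < lam := by
      refine lt_of_le_of_lt ?_ (hsU α hα)
      refine Cardinal.mk_le_of_injective (f := fun s : B => (⟨T s.1, s.2.2⟩ : ⋃₀ F α)) ?_
      intro s t h
      exact Subtype.ext (Tinj s.2.1 t.2.1 (by simpa using h))
    have hch : ∀ s : B, ∃ γ, γ < lam.ord ∧ (s : Set A) ∈ F γ := by
      intro s
      have hs : (s : Set A) ∈ ⋃ α : Set.Iio lam.ord, F α.1 := hunion ▸ s.2.1
      obtain ⟨⟨β, hβ⟩, hmem⟩ := mem_iUnion.1 hs
      exact ⟨β, hβ, hmem⟩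
    choose f hf1 hf2 using hch
    have hsup : (⨆ s, f s) < lam.ord := Cardinal.iSup_lt_ord_of_isRegular hreg hBcard hf1
    refine ⟨max (Order.succ α) (Order.succ (⨆ s, f s)), ?_, ?_, ?_⟩
    · exact lt_of_lt_of_le (Order.lt_succ α) (le_max_left _ _)
    · exact max_lt (hordlim.succ_lt hα) (hordlim.succ_lt hsup)
    · intro s hs hTs
      have hsB : s ∈ B := ⟨hs, hTs⟩
      refine hmono (f ⟨s, hsB⟩) _ ?_ (max_lt (hordlim.succ_lt hα) (hordlim.succ_lt hsup))
        (hf2 ⟨s, hsB⟩)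
      exact le_trans (le_trans (Ordinal.le_iSup f ⟨s, hsB⟩) (Order.le_succ _))
        (le_max_right _ _)
  -- the choice version of keyg
  set g : Ordinal → Ordinal := fun α => if h : α < lam.ord then (keyg α h).choose else 0
    with hgdef
  have hg : ∀ α (h : α < lam.ord), α < g α ∧ g α < lam.ord ∧
      ∀ s ∈ S, T s ∈ ⋃₀ F α → s ∈ F (g α) := by
    intro α h
    simp only [hgdef, dif_pos h]
    exact (keyg α h).choose_spec
  refine ⟨C, ⟨fun α hα => hα.1, ?_, ?_⟩, ?_⟩
  · -- unbounded
    intro b hb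
    set f : ℕ → Ordinal := fun n => Nat.rec (Order.succ b) (fun _ ih => g ih) n with hfdef
    have hflt : ∀ n, f n < lam.ord := by
      intro n
      induction n with
      | zero => exact hordlim.succ_lt hb
      | succ n ih => exact (hg _ ih).2.1
    have hfmono : ∀ n, f n < f (n + 1) := fun n => (hg _ (hflt n)).1
    have hα : (⨆ n, f n) < lam.ord := by
      refine Cardinal.iSup_lt_ord_lift_of_isRegular hreg ?_ hflt
      simpa using hunc
    set α := ⨆ n, f n with hαdef
    have hle : ∀ n, f n ≤ α := Ordinal.le_iSup f
    have hbα : b < α := lt_of_lt_of_le (Order.lt_succ b) (hle 0)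
    have hlim : Order.IsSuccLimit α := by
      refine Ordinal.isSuccLimit_iff.2 ⟨(lt_of_le_of_lt (zero_le (a := b)) hbα).ne', Order.isSuccPrelimit_of_succ_lt fun β hβ => ?_⟩
      obtain ⟨n, hn⟩ := Ordinal.lt_iSup_iff.1 hβ
      exact lt_of_le_of_lt (Order.succ_le_of_lt hn)
        (lt_of_lt_of_le (hfmono n) (hle (n + 1)))
    refine ⟨α, ⟨hα, ?_⟩, hbα⟩
    intro s hsS hsF hTs
    rw [hcont α hα hlim, Set.sUnion_iUnion] at hTs
    obtain ⟨β, hβ⟩ := mem_iUnion.1 hTs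
    obtain ⟨n, hn⟩ := Ordinal.lt_iSup_iff.1 β.2
    have hTn : T s ∈ ⋃₀ F (f n) :=
      Set.sUnion_mono (hmono β.1 (f n) hn.le (hflt n)) hβ
    have hs1 : s ∈ F (g (f n)) := (hg (f n) (hflt n)).2.2 s hsS hTn
    have hs2 : s ∈ F (f (n + 1)) := hs1
    exact hsF (hmono (f (n + 1)) α (hle (n + 1)) hα hs2)
  · -- closed
    intro b hb hb0 hcl
    have hblim : Order.IsSuccLimit b := by
      refine Ordinal.isSuccLimit_iff.2 ⟨hb0, Order.isSuccPrelimit_of_succ_lt fun d hd => ?_⟩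
      obtain ⟨c, _, hdc, hcb⟩ := hcl d hd
      exact lt_of_le_of_lt (Order.succ_le_of_lt hdc) hcb
    refine ⟨hb, ?_⟩
    intro s hsS hsF hTs
    rw [hcont b hb hblim, Set.sUnion_iUnion] at hTs
    obtain ⟨β, hβ⟩ := mem_iUnion.1 hTs
    obtain ⟨c, hcC, hβc, hcb⟩ := hcl β.1 β.2
    refine hcC.2 s hsS (fun h => hsF (hmono c b hcb.le hb h)) ?_
    exact Set.sUnion_mono (hmono β.1 c hβc.le hcC.1) hβ
  · -- transversal from membership in C
    intro α hαC
    obtain ⟨hα, hgood⟩ := hαC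
    have hsel : ∀ q ∈ quotFam S (F α), ∃ x, x ∈ S \ F α ∧ x \ ⋃₀ F α = q := by
      intro q hq
      obtain ⟨x, hx, he⟩ := hq
      exact ⟨x, hx, he⟩
    set sel : Set A → Set A := fun q =>
      if h : q ∈ quotFam S (F α) then (hsel q h).choose else q with hseldef
    have hsel1 : ∀ q ∈ quotFam S (F α), sel q ∈ S \ F α ∧ sel q \ ⋃₀ F α = q := by
      intro q hq
      simp only [hseldef, dif_pos hq]
      exact (hsel q hq).choose_spec
    refine ⟨T ∘ sel, ?_, ?_⟩
    · intro q1 h1 q2 h2 he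
      have e1 := hsel1 q1 h1
      have e2 := hsel1 q2 h2
      have : sel q1 = sel q2 := Tinj e1.1.1 e2.1.1 he
      rw [← e1.2, ← e2.2, this]
    · intro q hq
      obtain ⟨⟨hS', hF'⟩, he⟩ := hsel1 q hq
      have hm : T (sel q) ∈ sel q \ ⋃₀ F α := ⟨Tmem _ hS', hgood _ hS' hF'⟩
      rw [he] at hm
      exact hm
end

section
/- Let μ be a singular cardinal with cf(μ) = κ, let ⟨μ_ξ : ξ < κ⟩ be an increasing sequence of regular cardinals cofinal in μ with μ_0 > κ⁺ and epsilon < μ_0 for a fixed ordinal epsilon < μ, and let ⟨f_α : α < μ⁺⟩ be a scale. Then the 'inward' player II has a winning strategy in the cub-game of length epsilon on the set good(f) of good points of the scale, where player II must ensure that every limit of the produced increasing sequence of ordinals whose index has cofinality different from κ lands in good(f). -/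
open Cardinal Set

/-- `α` is a good point for the sequence `f` (with index set `κo = cf(μ).ord`):
there are an unbounded `A ⊆ α` and `ζ < κo` with `f β ξ < f γ ξ` for all
`β < γ` in `A` and all `ζ ≤ ξ < κo`. -/
def GoodPt (f : Ordinal → Ordinal → Ordinal) (κo : Ordinal) (α : Ordinal) : Prop :=
  ∃ A : Set Ordinal, A ⊆ Set.Iio α ∧ (∀ b < α, ∃ c ∈ A, b < c) ∧
    ∃ ζ < κo, ∀ β ∈ A, ∀ γ ∈ A, β < γ → ∀ ξ, ζ ≤ ξ → ξ < κo → f β ξ < f γ ξ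

/-- restriction of a history to the moves before stage `i` (zero elsewhere). -/
noncomputable def restrictSeq (p : Ordinal → Ordinal) (i : Ordinal) : Ordinal → Ordinal :=
  fun j => if j < i then p j else 0

/-- replace the value of `p` at `i` by `v`. -/
noncomputable def extendSeq (p : Ordinal → Ordinal) (i v : Ordinal) : Ordinal → Ordinal :=
  fun j => if j = i then v else p j

/-- a legal position of length `i` in the cub-game on `lam`: a strictly increasing
sequence of ordinals below `lam` taking the supremum at limit stages. -/
def IsLegalPos (lam i : Ordinal) (p : Ordinal → Ordinal) : Prop :=
  (∀ j < i, p j < lam) ∧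
  (∀ j k : Ordinal, j < k → k < i → p j < p k) ∧
  (∀ j < i, Order.IsSuccLimit j → p j = ⨆ k : Set.Iio j, p k.1)

/-- the odd stages, at which player II moves. -/
def IsOddStage (i : Ordinal) : Prop :=
  ∃ (d : Ordinal) (n : ℕ), (d = 0 ∨ Order.IsSuccLimit d) ∧ i = d + (2 * n + 1 : ℕ)

/-- Player II has a winning strategy in the cub-game `𝔊^x_eps(A, lam)`: a strategy
producing legal moves at all odd stages such that in every legal play of length `eps`
following it, every limit stage `i` with `cf i ∈ x` lands in `A`. -/
def IIWinsCubGame (x : Set Cardinal) (eps lam : Ordinal) (A : Set Ordinal) : Prop :=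
  ∃ σ : (Ordinal → Ordinal) → Ordinal,
    (∀ i < eps, IsOddStage i → ∀ p, IsLegalPos lam i p →
      IsLegalPos lam (i + 1) (extendSeq p i (σ (restrictSeq p i)))) ∧
    (∀ p, IsLegalPos lam eps p →
      (∀ i < eps, IsOddStage i → p i = σ (restrictSeq p i)) →
      ∀ i < eps, Order.IsSuccLimit i → i.cof ∈ x → p i ∈ A)

lemma oddStage_exists_between (j : Ordinal) :
    ∃ k, IsOddStage k ∧ j < k ∧ k ≤ j + 2 := by
  obtain ⟨n, hn⟩ := Ordinal.lt_omega0.1 (Ordinal.mod_lt j Ordinal.omega0_ne_zero)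
  set d := Ordinal.omega0 * (j / Ordinal.omega0) with hd
  have hj : d + (n : Ordinal) = j := by rw [← hn, hd]; exact Ordinal.div_add_mod j _
  have hd0 : d = 0 ∨ Order.IsSuccLimit d := by
    rcases eq_or_ne (j / Ordinal.omega0) 0 with h | h
    · left; rw [hd, h, mul_zero]
    · right; exact Ordinal.isSuccLimit_mul_left Ordinal.isSuccLimit_omega0 (pos_iff_ne_zero.2 h)
  rcases Nat.even_or_odd n with ⟨m, hm⟩ | ⟨m, hm⟩
  · refine ⟨j + 1, ⟨d, m, hd0, ?_⟩, lt_add_one j, ?_⟩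
    · rw [← hj, add_assoc]
      congr 1
      have h2 : 2 * m + 1 = n + 1 := by omega
      rw [h2]; push_cast; ring
    · exact add_le_add le_rfl one_le_two
  · refine ⟨j + 2, ⟨d, m + 1, hd0, ?_⟩, ?_, le_refl _⟩
    · rw [← hj, add_assoc]
      congr 1
      have h2 : 2 * (m + 1) + 1 = n + 2 := by omega
      rw [h2]; push_cast; ring
    · exact lt_of_lt_of_le (lt_add_one j) (add_le_add le_rfl one_le_two)

lemma oddStage_one_le {i : Ordinal} (h : IsOddStage i) : 1 ≤ i := by
  obtain ⟨d, n, -, rfl⟩ := h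
  calc (1:Ordinal) ≤ ((2*n+1 : ℕ) : Ordinal) := by exact_mod_cast Nat.le_add_left 1 (2*n)
  _ ≤ d + ((2*n+1 : ℕ) : Ordinal) := le_add_self

lemma oddStage_not_limit {i : Ordinal} (h : IsOddStage i) : ¬ Order.IsSuccLimit i := by
  obtain ⟨d, n, -, rfl⟩ := h
  have h2 : d + ((2*n+1 : ℕ) : Ordinal) = Order.succ (d + ((2*n : ℕ) : Ordinal)) := by
    push_cast
    rw [← add_assoc, Ordinal.add_one_eq_succ]
  rw [h2]; exact Order.not_isSuccLimit_succ _

noncomputable def stageOf (q : Ordinal → Ordinal) : Ordinal := sInf {j | 1 ≤ j ∧ q j = 0}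

lemma stageOf_restrict (p : Ordinal → Ordinal) (i : Ordinal) (h1 : 1 ≤ i)
    (hmono : ∀ j k, j < k → k < i → p j < p k) : stageOf (restrictSeq p i) = i := by
  have hmem : i ∈ {j | 1 ≤ j ∧ restrictSeq p i j = 0} :=
    ⟨h1, by simp [restrictSeq]⟩
  apply le_antisymm (csInf_le' hmem)
  refine le_csInf ⟨i, hmem⟩ ?_
  rintro j ⟨hj1, hj0⟩
  by_contra h
  push_neg at h
  rw [restrictSeq, if_pos h] at hj0
  have h0j : (0:Ordinal) < j := lt_of_lt_of_le zero_lt_one hj1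
  have := hmono 0 j h0j h
  rw [hj0] at this
  exact absurd this (show (0:Ordinal) ≤ p 0 from zero_le).not_gt

/-- For a singular `μ` of cofinality `κ` with a scale `⟨f_α : α < μ⁺⟩` and any ordinal
`eps < μ_0` (so `eps < μ`), player II wins the cub-game of length `eps` on the set of
good points, where limits are checked at all regular cofinalities below `μ⁺` except `κ`. -/
theorem stmt3 (μ κ : Cardinal) (μs : Ordinal → Cardinal)
    (f : Ordinal → Ordinal → Ordinal) (eps : Ordinal)
    (hinf : ℵ₀ ≤ μ) (hκ : μ.ord.cof = κ) (hsing : κ < μ)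
    (hreg : ∀ ξ < κ.ord, (μs ξ).IsRegular)
    (hμs : ∀ ξ η : Ordinal, ξ < η → η < κ.ord → μs ξ < μs η)
    (hlt : ∀ ξ < κ.ord, μs ξ < μ)
    (hcofμ : ∀ c < μ, ∃ ξ < κ.ord, c < μs ξ)
    (hμ0 : Order.succ κ < μs 0)
    (heps0 : eps < (μs 0).ord) (hepsμ : eps < μ.ord)
    (hf : ∀ α < (Order.succ μ).ord, ∀ ξ < κ.ord, f α ξ < (μs ξ).ord)
    (hinc : ∀ α β : Ordinal, α < β → β < (Order.succ μ).ord →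
      ∃ ζ < κ.ord, ∀ ξ, ζ ≤ ξ → ξ < κ.ord → f α ξ < f β ξ)
    (hcofinal : ∀ g : Ordinal → Ordinal, (∀ ξ < κ.ord, g ξ < (μs ξ).ord) →
      ∃ α < (Order.succ μ).ord, ∃ ζ < κ.ord, ∀ ξ, ζ ≤ ξ → ξ < κ.ord → g ξ < f α ξ) :
    IIWinsCubGame {c : Cardinal | c.IsRegular ∧ c.ord < (Order.succ μ).ord ∧ c ≠ κ}
      eps (Order.succ μ).ord {α | GoodPt f κ.ord α} := by
  classical
  set lam := (Order.succ μ).ord with hlamdef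
  have hμlim : Order.IsSuccLimit μ.ord := Cardinal.isSuccLimit_ord hinf
  have hκreg : κ.IsRegular := hκ ▸ Cardinal.isRegular_cof hμlim
  have hκo0 : (0:Ordinal) < κ.ord := (Cardinal.isSuccLimit_ord hκreg.aleph0_le).pos
  have hsuccreg : (Order.succ μ).IsRegular := Cardinal.isRegular_succ hinf
  have hlamcof : lam.cof = Order.succ μ := hsuccreg.cof_eq
  have hμsord : ∀ ξ < κ.ord, (μs 0).ord ≤ (μs ξ).ord := by
    intro ξ hξ
    rcases eq_or_ne ξ 0 with rfl | h
    · exact le_refl _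
    · exact Cardinal.ord_le_ord.2 (hμs 0 ξ (pos_iff_ne_zero.2 h) hξ).le
  have hcard : ∀ i ≤ eps, ∀ ξ < κ.ord, i.card < μs ξ := by
    intro i hi ξ hξ
    exact Cardinal.lt_ord.1 (lt_of_le_of_lt hi (lt_of_lt_of_le heps0 (hμsord ξ hξ)))
  have hepslam : eps < lam := hepsμ.trans (Cardinal.ord_lt_ord.2 (Order.lt_succ μ))
  have hcardlam : ∀ i ≤ eps, i.card < Order.succ μ := by
    intro i hi
    exact Cardinal.lt_ord.1 (lt_of_le_of_lt hi hepslam)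
  have hsucc : ∀ i j : Ordinal, (j < i + 1 ↔ j ≤ i) := by
    intro i j; rw [Ordinal.add_one_eq_succ, Order.lt_succ_iff]
  -- key move existence
  have hA : ∀ i < eps, ∀ q : Ordinal → Ordinal, (∀ j < i, q j < lam) →
      ∃ v, v < lam ∧ (∀ j < i, q j < v) ∧
        ∃ ζ < κ.ord, ∀ j < i, ∀ ξ, ζ ≤ ξ → ξ < κ.ord → f (q j) ξ < f v ξ := by
    intro i hi q hq
    set g : Ordinal → Ordinal := fun ξ =>
      if ξ < κ.ord then Ordinal.blsub i (fun j _ => f (q j) ξ) else 0 with hgdef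
    have hgeq : ∀ ξ, ξ < κ.ord → g ξ = Ordinal.blsub i (fun j _ => f (q j) ξ) := by
      intro ξ hξ
      simp only [hgdef]
      exact if_pos hξ
    have hgζ : ∀ ξ, ξ < κ.ord → ∀ j, j < i → f (q j) ξ < g ξ := by
      intro ξ hξ j hj
      rw [hgeq ξ hξ]
      exact Ordinal.lt_blsub _ j hj
    have hg : ∀ ξ < κ.ord, g ξ < (μs ξ).ord := by
      intro ξ hξ
      rw [hgeq ξ hξ]
      refine Ordinal.blsub_lt_ord ?_ ?_
      · rw [(hreg ξ hξ).cof_eq]; exact hcard i hi.le ξ hξ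
      · intro j hj; exact hf (q j) (hq j hj) ξ hξ
    obtain ⟨α, hαlam, ζ₁, hζ₁, hd1⟩ := hcofinal g hg
    have hβlam : Ordinal.blsub i (fun j _ => q j) < lam := by
      refine Ordinal.blsub_lt_ord ?_ hq
      rw [hlamcof]; exact hcardlam i hi.le
    rcases le_or_gt (Ordinal.blsub i (fun j _ => q j)) α with hle | hlt2
    · exact ⟨α, hαlam, fun j hj => (Ordinal.lt_blsub _ j hj).trans_le hle,
        ζ₁, hζ₁, fun j hj ξ h1 h2 => (hgζ ξ h2 j hj).trans (hd1 ξ h1 h2)⟩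
    · obtain ⟨ζ₂, hζ₂, hd2⟩ := hinc α _ hlt2 hβlam
      refine ⟨_, hβlam, fun j hj => Ordinal.lt_blsub _ j hj, max ζ₁ ζ₂, max_lt hζ₁ hζ₂,
        fun j hj ξ h1 h2 => ?_⟩
      exact ((hgζ ξ h2 j hj).trans (hd1 ξ (le_trans (le_max_left _ _) h1) h2)).trans
        (hd2 ξ (le_trans (le_max_right _ _) h1) h2)
  have hA2 : ∀ q : Ordinal → Ordinal, ∃ v,
      (stageOf q < eps ∧ ∀ j < stageOf q, q j < lam) →
      (v < lam ∧ (∀ j < stageOf q, q j < v) ∧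
        ∃ ζ < κ.ord, ∀ j < stageOf q, ∀ ξ, ζ ≤ ξ → ξ < κ.ord → f (q j) ξ < f v ξ) := by
    intro q
    by_cases h : stageOf q < eps ∧ ∀ j < stageOf q, q j < lam
    · obtain ⟨v, hv⟩ := hA _ h.1 q h.2
      exact ⟨v, fun _ => hv⟩
    · exact ⟨0, fun hh => absurd hh h⟩
  choose σ hσ using hA2
  refine ⟨σ, ?_, ?_⟩
  · -- legality of the strategy's moves
    intro i hi hodd p hp
    obtain ⟨hbd, hmono, hlimit⟩ := hp
    have hst : stageOf (restrictSeq p i) = i :=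
      stageOf_restrict p i (oddStage_one_le hodd) hmono
    have hq : ∀ j < i, restrictSeq p i j < lam := by
      intro j hj; rw [restrictSeq]; simp only [if_pos hj]; exact hbd j hj
    obtain ⟨hvlam, hvgt, -⟩ := hσ (restrictSeq p i) (by rw [hst]; exact ⟨hi, hq⟩)
    rw [hst] at hvgt
    refine ⟨?_, ?_, ?_⟩
    · intro j hj
      rcases eq_or_ne j i with rfl | hne
      · simp only [extendSeq, if_pos rfl]; exact hvlam
      · have hji : j < i := ((hsucc i j).1 hj).lt_of_ne hne
        simp only [extendSeq, if_neg hne]; exact hbd j hji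
    · intro j k hjk hk
      have hki : k ≤ i := (hsucc i k).1 hk
      have hji : j < i := lt_of_lt_of_le hjk hki
      rcases eq_or_ne k i with rfl | hkne
      · simp only [extendSeq, if_neg (ne_of_lt hjk), if_pos rfl]
        have hx := hvgt j hjk
        simp only [restrictSeq, if_pos hjk] at hx
        exact hx
      · have hki' : k < i := hki.lt_of_ne hkne
        simp only [extendSeq, if_neg (ne_of_lt hji), if_neg hkne]
        exact hmono j k hjk hki'
    · intro j hj hjlim
      have hji : j < i :=
        ((hsucc i j).1 hj).lt_of_ne (by rintro rfl; exact oddStage_not_limit hodd hjlim)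
      have he : extendSeq p i (σ (restrictSeq p i)) j = p j := by
        simp only [extendSeq, if_neg (ne_of_lt hji)]
      rw [he, hlimit j hji hjlim]
      refine iSup_congr ?_
      intro k
      simp only [extendSeq, if_neg (ne_of_lt (k.2.trans hji))]
  · -- winning condition
    intro p hp hfollow i hi hlim hcof
    obtain ⟨hbd, hmono, hlimit⟩ := hp
    obtain ⟨hcreg, hclt, hcne⟩ := hcof
    have hZ' : ∀ k : Ordinal, ∃ z, z < κ.ord ∧ (IsOddStage k → k < eps →
        ∀ j < k, ∀ ξ, z ≤ ξ → ξ < κ.ord → f (p j) ξ < f (p k) ξ) := by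
      intro k
      by_cases hk : IsOddStage k ∧ k < eps
      · have hst : stageOf (restrictSeq p k) = k :=
          stageOf_restrict p k (oddStage_one_le hk.1)
            (fun a b hab hb => hmono a b hab (hb.trans hk.2))
        obtain ⟨-, -, ζ, hζ, hdom⟩ := hσ (restrictSeq p k) (by
          rw [hst]
          refine ⟨hk.2, fun j hj => ?_⟩
          simp only [restrictSeq, if_pos hj]; exact hbd j (hj.trans hk.2))
        rw [hst] at hdom
        refine ⟨ζ, hζ, fun _ _ j hj ξ h1 h2 => ?_⟩
        have hh := hdom j hj ξ h1 h2
        simp only [restrictSeq, if_pos hj] at hh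
        rwa [← hfollow k hk.2 hk.1] at hh
      · exact ⟨0, hκo0, fun h1 h2 => absurd ⟨h1, h2⟩ hk⟩
    choose ζk hζκ hζdom using hZ'
    have hpi : p i = Ordinal.bsup i (fun j _ => p j) := by
      rw [hlimit i hi hlim]; exact Ordinal.iSup_Iio_eq_bsup (f := fun j _ => p j)
    have hmono' : ∀ j k, j < k → k < i → p j < p k := fun j k h hk => hmono j k h (hk.trans hi)
    have hub : ∀ k < i, p k < p i := fun k hk => hmono k i hk hi
    have hoddab : ∀ c < i, ∃ k, IsOddStage k ∧ c < k ∧ k < i := by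
      intro c hc
      obtain ⟨k, hodd, h1, h2⟩ := oddStage_exists_between c
      refine ⟨k, hodd, h1, lt_of_le_of_lt h2 ?_⟩
      have h3 := hlim.succ_lt (hlim.succ_lt hc)
      rwa [← Ordinal.add_one_eq_succ, ← Ordinal.add_one_eq_succ, add_assoc,
        one_add_one_eq_two] at h3
    show GoodPt f κ.ord (p i)
    rcases lt_trichotomy i.cof κ with hclt2 | heq | hgt
    · -- cof i < κ
      obtain ⟨s, hs⟩ := Ordinal.exists_fundamental_sequence i
      have hθκ : i.cof.ord < κ.ord := Cardinal.ord_lt_ord.2 hclt2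
      set s' : Ordinal → Ordinal := fun b => if hb : b < i.cof.ord then s b hb else 0 with hs'
      choose ks hksodd hksgt hksle using fun b => oddStage_exists_between (s' b)
      have hksi : ∀ b < i.cof.ord, ks b < i := by
        intro b hb
        have h1 : s' b < i := by rw [hs']; simp only [dif_pos hb]; exact hs.lt hb
        have h3 := hlim.succ_lt (hlim.succ_lt h1)
        rw [← Ordinal.add_one_eq_succ, ← Ordinal.add_one_eq_succ, add_assoc,
          one_add_one_eq_two] at h3
        exact lt_of_le_of_lt (hksle b) h3
      refine ⟨{y | ∃ b, b < i.cof.ord ∧ y = p (ks b)}, ?_, ?_, ?_⟩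
      · rintro y ⟨b, hb, rfl⟩; exact hub _ (hksi b hb)
      · intro b0 hb0
        rw [hpi] at hb0
        obtain ⟨j, hj, hb0j⟩ := (Ordinal.lt_bsup _).1 hb0
        have hjb : j < Ordinal.blsub i.cof.ord s := by rw [hs.blsub_eq]; exact hj
        obtain ⟨b, hb, hjb2⟩ := Ordinal.lt_blsub_iff.1 hjb
        refine ⟨p (ks b), ⟨b, hb, rfl⟩, ?_⟩
        have hsb : s' b = s b hb := by rw [hs']; simp only [dif_pos hb]
        have hjk : j < ks b := lt_of_le_of_lt (hjb2.trans_eq hsb.symm) (hksgt b)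
        exact hb0j.trans (hmono' j (ks b) hjk (hksi b hb))
      · refine ⟨Ordinal.bsup i.cof.ord (fun b _ => ζk (ks b)), ?_, ?_⟩
        · refine Ordinal.bsup_lt_ord ?_ (fun b hb => hζκ (ks b))
          rw [hκreg.cof_eq, Cardinal.card_ord]; exact hclt2
        · rintro y1 ⟨b1, hb1, rfl⟩ y2 ⟨b2, hb2, rfl⟩ hlt12 ξ hξ1 hξ2
          have hkk : ks b1 < ks b2 := by
            by_contra h
            push_neg at h
            have hle2 : p (ks b2) ≤ p (ks b1) := by
              rcases h.lt_or_eq with h' | h'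
              · exact (hmono' _ _ h' (hksi b1 hb1)).le
              · rw [h']
            exact absurd hlt12 hle2.not_gt
          exact hζdom (ks b2) (hksodd b2) ((hksi b2 hb2).trans hi) (ks b1) hkk ξ
            (le_trans (Ordinal.le_bsup (fun b _ => ζk (ks b)) b2 hb2) hξ1) hξ2
    · exact absurd heq hcne
    · -- κ < cof i
      have hclaim : ∃ z < κ.ord, ∀ c < i, ∃ k, IsOddStage k ∧ c < k ∧ k < i ∧ ζk k ≤ z := by
        by_contra hcon
        push_neg at hcon
        choose C hCi hC using hcon
        have hsup : Ordinal.bsup κ.ord C = i := by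
          apply le_antisymm
          · exact Ordinal.bsup_le_iff.2 fun z hz => (hCi z hz).le
          · by_contra hhh
            push_neg at hhh
            obtain ⟨k, hodd, h1, h2⟩ := hoddab _ hhh
            have hzk := hζκ k
            have hk_le : k ≤ C (ζk k) hzk := by
              by_contra hcc
              push_neg at hcc
              exact absurd le_rfl (hC (ζk k) hzk k hodd hcc h2).not_ge
            exact absurd (lt_of_lt_of_le h1 (hk_le.trans (Ordinal.le_bsup C (ζk k) hzk)))
              (lt_irrefl _)
        have hcof_le : i.cof ≤ κ := by
          have hH : ∀ z hz, C z hz < Ordinal.bsup κ.ord C := by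
            intro z hz; rw [hsup]; exact hCi z hz
          have hc2 := Ordinal.cof_bsup_le hH
          rwa [hsup, Cardinal.card_ord] at hc2
        exact absurd hgt hcof_le.not_gt
      obtain ⟨z, hzκ, hz⟩ := hclaim
      refine ⟨{y | ∃ k, IsOddStage k ∧ k < i ∧ ζk k ≤ z ∧ y = p k}, ?_, ?_, z, hzκ, ?_⟩
      · rintro y ⟨k, -, hk, -, rfl⟩; exact hub _ hk
      · intro b0 hb0
        rw [hpi] at hb0
        obtain ⟨j, hj, hb0j⟩ := (Ordinal.lt_bsup _).1 hb0
        obtain ⟨k, hodd, h1, h2, h3⟩ := hz j hj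
        exact ⟨p k, ⟨k, hodd, h2, h3, rfl⟩, hb0j.trans (hmono' j k h1 h2)⟩
      · rintro y1 ⟨k1, hodd1, hk1, hz1, rfl⟩ y2 ⟨k2, hodd2, hk2, hz2, rfl⟩ hlt12 ξ hξ1 hξ2
        have hkk : k1 < k2 := by
          by_contra h
          push_neg at h
          have hle2 : p k2 ≤ p k1 := by
            rcases h.lt_or_eq with h' | h'
            · exact (hmono' _ _ h' hk1).le
            · rw [h']
          exact absurd hlt12 hle2.not_gt
        exact hζdom k2 hodd2 (hk2.trans hi) k1 hkk ξ (hz2.trans hξ1) hξ2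
end

section
/- Suppose λ = μ⁺ and A ⊆ λ are such that for every ε < μ player II has a winning strategy in the cub-game 𝔊^x_ε(A, λ), and moreover if μ is regular, player II wins 𝔊^x_{μ+1}(A, λ). Then for every σ < λ, player II has a winning strategy in 𝔊^x_σ(A, λ). -/
open scoped Classical


open Cardinal Set

namespace CubAux
open Ordinal
universe u

theorem zero_or_succ_or_limit (o : Ordinal) :
    o = 0 ∨ (∃ a, o = Order.succ a) ∨ Order.IsSuccLimit o := by
  rcases zero_or_succ_or_isSuccLimit o with h | ⟨a, rfl⟩ | h
  · exact Or.inl h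
  · exact Or.inr (Or.inl ⟨a, rfl⟩)
  · exact Or.inr (Or.inr h)

theorem add_nat_lt {b δ : Ordinal} (h : b < δ) (hδ : Order.IsSuccLimit δ) (n : ℕ) : b + (n : ℕ) < δ := by
  induction n with
  | zero => simpa using h
  | succ m ih =>
      have h2 : b + ((m+1 : ℕ) : Ordinal) = Order.succ (b + (m : ℕ)) := by
        rw [Nat.cast_succ, ← add_assoc, add_one_eq_succ]
      rw [h2]
      exact hδ.succ_lt ih

theorem two_lt_omega0 : (2:Ordinal) < ω := by exact_mod_cast nat_lt_omega0 2

theorem two_mul_omega0 : (2 : Ordinal) * ω = ω :=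
  mul_omega0 (by norm_num) two_lt_omega0

theorem natCast_two_mul (n : ℕ) : ((2 * n : ℕ) : Ordinal) = 2 * (n : Ordinal) := by
  push_cast; rfl

theorem two_mul_limit {δ : Ordinal} (h : Order.IsSuccLimit δ) : 2 * δ = δ := by
  apply le_antisymm
  · rw [mul_le_iff_of_isSuccLimit h]
    intro η hη
    obtain ⟨n, hn⟩ := lt_omega0.1 (mod_lt η omega0_ne_zero)
    have hdm : ω * (η / ω) + η % ω = η := div_add_mod η ω
    have h2 : 2 * η = ω * (η / ω) + ((2 * n : ℕ) : Ordinal) := by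
      conv_lhs => rw [← hdm, hn]
      rw [mul_add, ← mul_assoc, two_mul_omega0, natCast_two_mul]
    rw [h2]
    exact (add_nat_lt (lt_of_le_of_lt (le_trans (le_self_add) hdm.le) hη) h _).le
  · simpa using mul_le_mul_left (one_le_two : (1:Ordinal) ≤ 2) δ

theorem limit_even {δ : Ordinal} (h : Order.IsSuccLimit δ) : δ % 2 = 0 := by
  conv_lhs => rw [← two_mul_limit h]
  have := mul_add_mod_self 2 δ 0
  simpa using this

theorem even_translate {s : Ordinal} (hs : s % 2 = 0) (j : Ordinal) : (s + j) % 2 = j % 2 := by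
  conv_lhs => rw [← div_add_mod s 2, hs, add_zero]
  exact mul_add_mod_self 2 _ j

theorem pair_div (η : Ordinal) {r : Ordinal} (hr : r < 2) : (2 * η + r) / 2 = η := by
  rw [mul_add_div η two_ne_zero r, div_eq_zero_of_lt hr, add_zero]

theorem pair_mod (η : Ordinal) {r : Ordinal} (hr : r < 2) : (2 * η + r) % 2 = r := by
  rw [mul_add_mod_self, mod_eq_of_lt hr]

theorem oddStage_iff {i : Ordinal} : IsOddStage i ↔ i % 2 = 1 := by
  constructor
  · rintro ⟨d, n, hd, rfl⟩
    have hd2 : d % 2 = 0 := by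
      rcases hd with rfl | hd
      · simp
      · exact limit_even hd
    have hc : ((2 * n + 1 : ℕ) : Ordinal) = 2 * (n : Ordinal) + 1 := by
      rw [Nat.cast_add, natCast_two_mul, Nat.cast_one]
    rw [even_translate hd2, hc, pair_mod _ one_lt_two]
  · intro h
    have hdm : 2 * (i / 2) + 1 = i := by conv_rhs => rw [← div_add_mod i 2, h]
    set q := i / 2 with hq
    obtain ⟨n, hn⟩ := lt_omega0.1 (mod_lt q omega0_ne_zero)
    have hq2 : ω * (q / ω) + (n : Ordinal) = q := by rw [← hn]; exact div_add_mod q ω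
    refine ⟨ω * (q / ω), n, ?_, ?_⟩
    · rcases eq_or_ne (q / ω) 0 with h0 | h0
      · left; simp [h0]
      · right; exact isSuccLimit_mul_left isSuccLimit_omega0 (pos_iff_ne_zero.2 h0)
    · have hc : ((2 * n + 1 : ℕ) : Ordinal) = 2 * (n : Ordinal) + 1 := by
        rw [Nat.cast_add, natCast_two_mul, Nat.cast_one]
      have h5 : 2 * q = ω * (q / ω) + 2 * (n : Ordinal) := by
        conv_lhs => rw [← hq2]
        rw [mul_add, ← mul_assoc, two_mul_omega0]
      rw [hc, ← hdm, h5, add_assoc]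

theorem odd_not_limit {i : Ordinal} (h : i % 2 = 1) : ¬ Order.IsSuccLimit i := by
  intro hl
  rw [limit_even hl] at h
  exact one_ne_zero h.symm

theorem odd_eq_succ {i : Ordinal} (h : i % 2 = 1) : i = 2 * (i / 2) + 1 := by
  conv_lhs => rw [← div_add_mod i 2, h]

theorem two_mul_lt_two_mul {a b : Ordinal} (h : a < b) : 2 * a < 2 * b :=
  mul_lt_mul_of_pos_left h (by norm_num : (0:Ordinal) < 2)

theorem pair_lt {ι ι' : Ordinal} (h : ι < ι') :
    ι / 2 < ι' / 2 ∨ (ι / 2 = ι' / 2 ∧ ι % 2 < ι' % 2) := by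
  rcases lt_trichotomy (ι / 2) (ι' / 2) with h1 | h1 | h1
  · exact Or.inl h1
  · refine Or.inr ⟨h1, ?_⟩
    have h0 := div_add_mod ι 2
    have h2 := div_add_mod ι' 2
    rw [← h0, ← h2, h1] at h
    exact (add_lt_add_iff_left _).1 h
  · exfalso
    have hle : ι' / 2 + 1 ≤ ι / 2 := by rwa [add_one_eq_succ, Order.succ_le_iff]
    have hlt : ι' < ι := by
      calc ι' < 2 * (ι' / 2) + 2 := by
              conv_lhs => rw [← div_add_mod ι' 2]
              exact add_lt_add_right (mod_lt _ two_ne_zero) _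
        _ = 2 * (ι' / 2 + 1) := by rw [mul_add, mul_one]
        _ ≤ 2 * (ι / 2) := mul_le_mul_right hle 2
        _ ≤ 2 * (ι / 2) + ι % 2 := le_self_add
        _ = ι := div_add_mod ι 2
    exact (lt_asymm h) hlt

theorem mod_two_le_one (ι : Ordinal) : ι % 2 ≤ 1 := by
  have h := mod_lt ι (two_ne_zero : (2:Ordinal) ≠ 0)
  have h2 : (2:Ordinal) = Order.succ 1 := by rw [← add_one_eq_succ]; norm_num
  rw [h2, Order.lt_succ_iff] at h
  rwa [← h2] at h

theorem limit_pair {ι : Ordinal} (h : Order.IsSuccLimit ι) : ι = 2 * (ι / 2) ∧ Order.IsSuccLimit (ι / 2) := by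
  have h0 : ι = 2 * (ι / 2) := by
    conv_lhs => rw [← div_add_mod ι 2, limit_even h, add_zero]
  refine ⟨h0, ?_⟩
  rcases zero_or_succ_or_limit (ι / 2) with hq | ⟨a, ha⟩ | hq
  · exfalso; rw [hq, mul_zero] at h0; exact h.pos.ne' h0
  · exfalso
    rw [ha, ← add_one_eq_succ, mul_add, mul_one] at h0
    have h3 : ι = (2 * a + 1) + 1 := by rw [h0, add_assoc]; norm_num
    rw [h3, add_one_eq_succ] at h
    exact (lt_irrefl _ (h.succ_lt (Order.lt_succ _)))
  · exact hq

theorem restrict_lt (p : Ordinal → Ordinal) {j i : Ordinal} (h : j < i) :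
    restrictSeq p i j = p j := if_pos h

theorem lt_add_one_iff' {j i : Ordinal} : j < i + 1 ↔ j ≤ i := by
  rw [add_one_eq_succ, Order.lt_succ_iff]

theorem legal_mono {lam i i' : Ordinal.{u}} {p : Ordinal.{u} → Ordinal.{u}} (h : IsLegalPos lam i p) (h' : i' ≤ i) :
    IsLegalPos lam i' p :=
  ⟨fun j hj => h.1 j (hj.trans_le h'), fun j k hjk hk => h.2.1 j k hjk (hk.trans_le h'),
   fun j hj hl => h.2.2 j (hj.trans_le h') hl⟩

theorem legal_le {lam i : Ordinal.{u}} {p : Ordinal.{u} → Ordinal.{u}} (h : IsLegalPos lam i p) {j k} (hjk : j ≤ k)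
    (hk : k < i) : p j ≤ p k := by
  rcases eq_or_lt_of_le hjk with rfl | hlt
  · exact le_rfl
  · exact (h.2.1 _ _ hlt hk).le

theorem legal_self_le {lam i : Ordinal.{u}} {p : Ordinal.{u} → Ordinal.{u}} (h : IsLegalPos lam i p) :
    ∀ k, k < i → k ≤ p k := by
  intro k
  induction k using Ordinal.induction with
  | _ k IH =>
    intro hk
    refine le_of_forall_lt fun c hc => lt_of_le_of_lt (IH c hc (hc.trans hk)) (h.2.1 c k hc hk)

theorem legal_extend {lam i v : Ordinal.{u}} {p : Ordinal.{u} → Ordinal.{u}} (h : IsLegalPos lam i p) (hni : ¬ Order.IsSuccLimit i)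
    (hv1 : v < lam) (hv2 : ∀ k < i, p k < v) : IsLegalPos lam (i+1) (extendSeq p i v) := by
  refine ⟨?_, ?_, ?_⟩
  · intro j hj
    rcases eq_or_lt_of_le (lt_add_one_iff'.1 hj) with rfl | hji
    · simpa [extendSeq] using hv1
    · rw [show extendSeq p i v j = p j from if_neg hji.ne]
      exact h.1 j hji
  · intro j k hjk hk
    by_cases hki : k = i
    · simp only [extendSeq]
      rw [if_pos hki, if_neg (hki ▸ hjk).ne]
      exact hv2 j (hki ▸ hjk)
    · have hki' : k < i := lt_of_le_of_ne (lt_add_one_iff'.1 hk) hki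
      simp only [extendSeq]
      rw [if_neg hki, if_neg (hjk.trans hki').ne]
      exact h.2.1 j k hjk hki'
  · intro j hj hjl
    rcases eq_or_lt_of_le (lt_add_one_iff'.1 hj) with rfl | hji
    · exact absurd hjl hni
    · rw [show extendSeq p i v j = p j from if_neg hji.ne, h.2.2 j hji hjl]
      exact iSup_congr fun k => (if_neg (k.2.trans hji).ne).symm

theorem legal_extend_rev {lam i v : Ordinal.{u}} {p : Ordinal.{u} → Ordinal.{u}} (h : IsLegalPos lam (i+1) (extendSeq p i v)) :
    v < lam ∧ ∀ k < i, p k < v := by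
  have hii : i < i + 1 := by rw [add_one_eq_succ]; exact Order.lt_succ i
  constructor
  · have := h.1 i hii; simpa [extendSeq] using this
  · intro k hk
    have h2 := h.2.1 k i hk hii
    rwa [show extendSeq p i v k = p k from if_neg hk.ne,
         show extendSeq p i v i = v from if_pos rfl] at h2

theorem legal_shift {lam i s m : Ordinal.{u}} {p : Ordinal.{u} → Ordinal.{u}} (h : IsLegalPos lam i p) (hsm : s + m ≤ i) :
    IsLegalPos lam m (fun k => p (s + k)) := by
  refine ⟨fun k hk => h.1 _ (lt_of_lt_of_le (add_lt_add_right hk s) hsm),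
         fun j k hjk hk => h.2.1 _ _ (add_lt_add_right hjk s)
           (lt_of_lt_of_le (add_lt_add_right hk s) hsm), ?_⟩
  intro k hk hkl
  have hsk : s + k < i := lt_of_lt_of_le (add_lt_add_right hk s) hsm
  have hsi : s < i := lt_of_le_of_lt (le_self_add : s ≤ s + k) hsk
  have hbig := h.2.2 (s+k) hsk (isSuccLimit_add s hkl)
  simp only []
  rw [hbig]
  apply le_antisymm
  · rw [Ordinal.iSup_le_iff]
    rintro ⟨t, ht⟩
    rcases lt_or_ge t s with hts | hst
    · have h0 : p t ≤ p (s + 0) := by rw [add_zero]; exact legal_le h hts.le hsi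
      exact h0.trans (Ordinal.le_iSup (fun k' : Iio k => p (s + k'.1)) ⟨0, hkl.pos⟩)
    · have ht' : s + (t - s) = t := Ordinal.add_sub_cancel_of_le hst
      have hk' : t - s < k := by
        rw [← add_lt_add_iff_left s, ht']; exact ht
      calc p t = p (s + (t-s)) := by rw [ht']
        _ ≤ _ := Ordinal.le_iSup (fun k' : Iio k => p (s + k'.1)) ⟨t - s, hk'⟩
  · rw [Ordinal.iSup_le_iff]
    rintro ⟨k', hk'⟩
    exact Ordinal.le_iSup (fun t : Iio (s+k) => p t.1) ⟨s + k', add_lt_add_right hk' s⟩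

theorem add_one_le_of_lt {a b : Ordinal.{u}} (h : a < b) : a + 1 ≤ b := by
  rw [add_one_eq_succ]; exact Order.succ_le_of_lt h

theorem E_gt (α : Ordinal.{u}) : α < 2*(α/2)+2 := by
  conv_lhs => rw [← div_add_mod α 2]
  exact add_lt_add_right (mod_lt _ two_ne_zero) _

theorem E_le (α : Ordinal.{u}) : 2*(α/2)+2 ≤ α + 2 :=
  add_le_add_left (mul_div_le α 2) 2

theorem E_even (α : Ordinal.{u}) : (2*(α/2)+2) % 2 = 0 := by
  have : 2*(α/2)+2 = 2*(α/2+1) := by rw [mul_add, mul_one]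
  rw [this]
  have := mul_add_mod_self 2 (α/2+1) 0
  simpa using this

noncomputable def sfAux (G : Ordinal.{u} → Ordinal.{u}) : Ordinal.{u} → Ordinal.{u} := fun ξ =>
  Ordinal.limitRecOn (motive := fun _ => Ordinal.{u}) ξ 0
    (fun η ih => 2*((max (ih+1) (G η))/2) + 2)
    (fun η _ ih => ⨆ η' : Iio η, ih η'.1 η'.2)

theorem sfAux_zero (G : Ordinal.{u} → Ordinal.{u}) : sfAux G 0 = 0 :=
  Ordinal.limitRecOn_zero _ _ _

theorem sfAux_succ (G : Ordinal.{u} → Ordinal.{u}) (η : Ordinal.{u}) :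
    sfAux G (η+1) = 2*((max (sfAux G η + 1) (G η))/2) + 2 := by
  rw [sfAux, add_one_eq_succ, Ordinal.limitRecOn_succ]
  rfl

theorem sfAux_limit (G : Ordinal.{u} → Ordinal.{u}) {η : Ordinal.{u}} (hη : Order.IsSuccLimit η) :
    sfAux G η = ⨆ η' : Iio η, sfAux G η'.1 := by
  rw [sfAux, Ordinal.limitRecOn_limit _ _ _ _ hη]
  rfl

theorem exists_sf {L : Ordinal.{u}} (hL : Order.IsSuccLimit L) :
    ∃ sf : Ordinal.{u} → Ordinal.{u},
      sf 0 = 0 ∧ StrictMono sf ∧ Order.IsNormal sf ∧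
      (∀ η, sf η % 2 = 0) ∧ (∀ η, sf η + 2 ≤ sf (η+1)) ∧
      (∀ ξ, ξ < L.cof.ord → sf ξ < L) ∧ sf L.cof.ord = L ∧
      (∀ η, Order.IsSuccLimit η → sf η = ⨆ η' : Iio η, sf η'.1) ∧
      (∀ η, Order.IsSuccLimit η → Order.IsSuccLimit (sf η)) := by
  obtain ⟨g, hg⟩ := Ordinal.exists_fundamental_sequence L
  have hκlim : Order.IsSuccLimit (L.cof.ord) := isSuccLimit_ord (aleph0_le_cof.2 hL)
  set G : Ordinal.{u} → Ordinal.{u} := fun ξ => if h : ξ < L.cof.ord then g ξ h else 0 with hG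
  have hGlt : ∀ ξ, ξ < L.cof.ord → G ξ < L := by
    intro ξ hξ
    rw [hG]; simp only [dif_pos hξ]
    exact hg.lt hξ
  set sf := sfAux G with hsf
  have eq0 : sf 0 = 0 := sfAux_zero G
  have eqs : ∀ η, sf (η+1) = 2*((max (sf η + 1) (G η))/2) + 2 := fun η => sfAux_succ G η
  have eql : ∀ η, Order.IsSuccLimit η → sf η = ⨆ η' : Iio η, sf η'.1 := fun η hη => sfAux_limit G hη
  have hgap : ∀ η, sf η + 2 ≤ sf (η+1) := by
    intro η
    rw [eqs η]
    calc sf η + 2 = (sf η + 1) + 1 := by rw [add_assoc]; norm_num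
      _ ≤ max (sf η + 1) (G η) + 1 := add_le_add_left (le_max_left _ _) 1
      _ ≤ _ := add_one_le_of_lt (E_gt _)
  have hsucc : ∀ η, sf η < sf (η+1) := by
    intro η
    have h1 : sf η < sf η + 2 :=
      lt_of_lt_of_le (lt_add_one_iff'.2 le_rfl) (add_le_add_right one_le_two (sf η))
    exact lt_of_lt_of_le h1 (hgap η)
  have hGsucc : ∀ η, G η < sf (η+1) := by
    intro η
    rw [eqs η]
    exact lt_of_le_of_lt (le_max_right _ _) (E_gt _)
  have hmono : StrictMono sf := by
    have key : ∀ η η', η' < η → sf η' < sf η := by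
      intro η
      induction η using Ordinal.induction with
      | _ η IH =>
        intro η' hη'
        rcases zero_or_succ_or_limit η with rfl | ⟨a, rfl⟩ | hη
        · exact absurd hη' (by simp)
        · rcases eq_or_lt_of_le (Order.lt_succ_iff.1 hη') with rfl | hlt
          · rw [← add_one_eq_succ]; exact hsucc η'
          · refine lt_trans (IH a (Order.lt_succ a) η' hlt) ?_
            rw [← add_one_eq_succ]; exact hsucc a
        · rw [eql η hη]
          exact lt_of_lt_of_le (hsucc η')
            (Ordinal.le_iSup (fun η'' : Iio η => sf η''.1) ⟨η'+1, hη.succ_lt hη'⟩)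
    exact fun a b h => key b a h
  have hnorm : Order.IsNormal sf := by
    rw [Order.isNormal_iff]
    refine ⟨hmono, fun o ho a h => ?_⟩
    rw [eql o ho]
    exact Ordinal.iSup_le_iff.2 fun η' => h η'.1 η'.2
  have hsflim : ∀ η, Order.IsSuccLimit η → Order.IsSuccLimit (sf η) := by
    intro η hη
    rw [Ordinal.isSuccLimit_iff]; refine ⟨?_, Order.isSuccPrelimit_of_succ_lt ?_⟩
    · have h0 := hmono hη.pos
      rw [eq0] at h0
      exact h0.ne'
    · intro a ha
      rw [eql η hη] at ha
      obtain ⟨⟨η', hη'⟩, ha'⟩ := Ordinal.lt_iSup_iff.1 ha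
      have h1 : Order.succ a ≤ sf η' := Order.succ_le_of_lt ha'
      refine lt_of_le_of_lt (h1.trans (hsucc η').le) (hmono ?_)
      rw [add_one_eq_succ]
      exact hη.succ_lt hη'
  have heven : ∀ η, sf η % 2 = 0 := by
    intro η
    rcases zero_or_succ_or_limit η with rfl | ⟨a, rfl⟩ | hη
    · rw [eq0]; simp
    · rw [← add_one_eq_succ, eqs]; exact E_even _
    · exact limit_even (hsflim η hη)
  have hslt : ∀ ξ, ξ < L.cof.ord → sf ξ < L := by
    intro ξ
    induction ξ using Ordinal.induction with
    | _ ξ IH =>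
      intro hξ
      rcases zero_or_succ_or_limit ξ with rfl | ⟨a, rfl⟩ | hξl
      · rw [eq0]; exact hL.pos
      · have ha' : a < L.cof.ord := lt_trans (Order.lt_succ a) hξ
        have h1 : sf a < L := IH a (Order.lt_succ a) ha'
        have h2 : max (sf a + 1) (G a) < L := by
          refine max_lt ?_ (hGlt a ha')
          rw [add_one_eq_succ]
          exact hL.succ_lt h1
        rw [← add_one_eq_succ]
        refine lt_of_le_of_lt ((eqs a).le.trans (E_le _)) ?_
        have h3 := add_nat_lt h2 hL 2
        simpa using h3
      · rw [eql ξ hξl]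
        refine Ordinal.lift_iSup_lt_of_lt_cof ?_ fun η' => IH η'.1 η'.2 (lt_trans η'.2 hξ)
        simp only [Cardinal.mk_Iio_ordinal, Cardinal.lift_lift, ← Ordinal.lift_cof, Cardinal.lift_lt]
        exact Cardinal.lt_ord.1 hξ
  have hstop : sf L.cof.ord = L := by
    rw [eql L.cof.ord hκlim]
    apply le_antisymm
    · exact Ordinal.iSup_le_iff.2 fun η' => (hslt η'.1 η'.2).le
    · refine le_of_forall_lt fun b hb => ?_
      have hb2 : b < Ordinal.blsub L.cof.ord g := by rw [hg.blsub_eq]; exact hb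
      obtain ⟨ζ, hζ, hble⟩ := Ordinal.lt_blsub_iff.1 hb2
      have hbG : b ≤ G ζ := by rw [hG]; simp only [dif_pos hζ]; exact hble
      calc b ≤ G ζ := hbG
        _ < sf (ζ+1) := hGsucc ζ
        _ ≤ _ := Ordinal.le_iSup (fun η' : Iio L.cof.ord => sf η'.1) ⟨ζ+1, hκlim.succ_lt hζ⟩
  exact ⟨sf, eq0, hmono, hnorm, heven, hgap, hslt, hstop, eql, hsflim⟩

theorem legal_congr {lam i : Ordinal.{u}} {p p' : Ordinal.{u} → Ordinal.{u}}
    (hpp : ∀ j, j < i → p j = p' j) (h : IsLegalPos lam i p) : IsLegalPos lam i p' := by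
  refine ⟨fun j hj => (hpp j hj) ▸ h.1 j hj,
    fun j k hjk hk => by rw [← hpp j (hjk.trans hk), ← hpp k hk]; exact h.2.1 j k hjk hk, ?_⟩
  intro j hj hjl
  rw [← hpp j hj, h.2.2 j hj hjl]
  exact iSup_congr fun k => hpp k.1 (k.2.trans hj)

theorem legal_top {lam i : Ordinal.{u}} {p : Ordinal.{u} → Ordinal.{u}}
    (h : IsLegalPos lam i p) (hi : Order.IsSuccLimit i)
    (hv : p i = ⨆ k : Iio i, p k.1) (hvl : p i < lam) : IsLegalPos lam (i+1) p := by
  refine ⟨?_, ?_, ?_⟩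
  · intro j hj
    rcases eq_or_lt_of_le (lt_add_one_iff'.1 hj) with rfl | hji
    · exact hvl
    · exact h.1 j hji
  · intro j k hjk hk
    rcases eq_or_lt_of_le (lt_add_one_iff'.1 hk) with rfl | hki
    · have h1 : p j < p (j+1) := h.2.1 j (j+1) (lt_add_one_iff'.2 le_rfl)
        (by rw [add_one_eq_succ]; exact hi.succ_lt hjk)
      rw [hv]
      exact lt_of_lt_of_le h1 (Ordinal.le_iSup (fun t : Iio k => p t.1)
        ⟨j+1, by rw [add_one_eq_succ]; exact hi.succ_lt hjk⟩)
    · exact h.2.1 j k hjk hki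
  · intro j hj hjl
    rcases eq_or_lt_of_le (lt_add_one_iff'.1 hj) with rfl | hji
    · exact hv
    · exact h.2.2 j hji hjl

theorem compose {x : Set Cardinal.{u}} {A : Set Ordinal.{u}} {lam L : Ordinal.{u}} {n : ℕ}
    (hL : Order.IsSuccLimit L) (hlam : Order.IsSuccLimit lam)
    (hsup : ∀ i, i ≤ L + (n:ℕ) → ∀ p : Ordinal.{u} → Ordinal.{u},
      (∀ k, k < i → p k < lam) → (⨆ k : Set.Iio i, p k.1) < lam)
    (hmaster : IIWinsCubGame x (2 * L.cof.ord + 1) lam A)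
    (hblock : ∀ ε, ε < L → IIWinsCubGame x ε lam A) :
    IIWinsCubGame x (L + (n:ℕ)) lam A := by
  obtain ⟨sf, sf0, sfmono, sfnorm, sfeven, sfgap, sflt, sftop, sflimeq, sflim⟩ := exists_sf hL
  set κo := L.cof.ord with hκdef
  have hκlim : Order.IsSuccLimit κo := isSuccLimit_ord (aleph0_le_cof.2 hL)
  obtain ⟨sM, hsM1, hsM2⟩ := hmaster
  have hLle : L ≤ L + (n:ℕ) := le_self_add
  have hdiv2 : ∀ ξ : Ordinal.{u}, (2*ξ)/2 = ξ := by
    intro ξ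
    rw [← add_zero (2*ξ), pair_div ξ zero_lt_two]
  have hmod2 : ∀ ξ : Ordinal.{u}, (2*ξ)%2 = 0 := by
    intro ξ
    rw [← add_zero (2*ξ), pair_mod ξ zero_lt_two]
  have hsuccκ : ∀ ξ, ξ < κo → ξ + 1 < κo := by
    intro ξ h
    rw [add_one_eq_succ]; exact hκlim.succ_lt h
  -- block data
  set blen : Ordinal.{u} → Ordinal.{u} := fun ξ => (sf (ξ+1) - (sf ξ + 2)) + 1 with hblendef
  have hsub : ∀ ξ, (sf ξ + 2) + (sf (ξ+1) - (sf ξ + 2)) = sf (ξ+1) :=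
    fun ξ => Ordinal.add_sub_cancel_of_le (sfgap ξ)
  have hblenlt : ∀ ξ, ξ < κo → blen ξ < L := by
    intro ξ hξ
    have h1 : sf (ξ+1) - (sf ξ + 2) ≤ sf (ξ+1) :=
      Ordinal.sub_le.2 (le_add_self)
    have h2 : sf (ξ+1) < L := sflt _ (hsuccκ ξ hξ)
    rw [hblendef]
    simp only []
    rw [add_one_eq_succ]
    exact hL.succ_lt (lt_of_le_of_lt h1 h2)
  have hbst : ∀ ξ : Ordinal.{u}, ∃ st : (Ordinal.{u} → Ordinal.{u}) → Ordinal.{u}, ξ < κo →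
      ((∀ i, i < blen ξ → IsOddStage i → ∀ p, IsLegalPos lam i p →
        IsLegalPos lam (i + 1) (extendSeq p i (st (restrictSeq p i)))) ∧
       (∀ p, IsLegalPos lam (blen ξ) p →
        (∀ i, i < blen ξ → IsOddStage i → p i = st (restrictSeq p i)) →
        ∀ i, i < blen ξ → Order.IsSuccLimit i → i.cof ∈ x → p i ∈ A)) := by
    intro ξ
    by_cases hξ : ξ < κo
    · obtain ⟨st, h1', h2'⟩ := hblock (blen ξ) (hblenlt ξ hξ)
      exact ⟨st, fun _ => ⟨fun i hi => h1' i hi, fun p hp hf => h2' p hp (fun i hi => hf i hi)⟩⟩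
    · exact ⟨fun _ => 0, fun h => absurd h hξ⟩
  choose τ hτ using hbst
  -- decoding the current stage from a restricted history
  set iDec : (Ordinal.{u} → Ordinal.{u}) → Ordinal.{u} :=
    fun q => max (sSup ((fun k => k + 1) '' {k | q k ≠ 0})) 1 with hiDecdef
  have hiDec : ∀ (p : Ordinal.{u} → Ordinal.{u}) i, IsLegalPos lam i p → i % 2 = 1 →
      iDec (restrictSeq p i) = i := by
    intro p i hp hodd
    have hdm := odd_eq_succ hodd
    have hS : ((fun k => k+1) '' {k | restrictSeq p i k ≠ 0}) ⊆ Iic i := by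
      rintro _ ⟨k, hk, rfl⟩
      by_cases hki : k < i
      · exact add_one_le_of_lt hki
      · exact absurd (if_neg hki) hk
    have hsle : sSup ((fun k => k+1) '' {k | restrictSeq p i k ≠ 0}) ≤ i := by
      rcases Set.eq_empty_or_nonempty ((fun k => k+1) '' {k | restrictSeq p i k ≠ 0}) with he | hne
      · rw [he, csSup_empty]
        exact bot_le
      · exact csSup_le hne fun b hb => hS hb
    rcases eq_or_ne (i/2) 0 with h0 | h0
    · have hi1 : i = 1 := by rw [hdm, h0, mul_zero, zero_add]
      rw [hiDecdef]
      simp only []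
      rw [max_eq_right (hi1 ▸ hsle), hi1]
    · have h2le : (2:Ordinal) ≤ 2*(i/2) := by
        conv_lhs => rw [← mul_one 2]
        exact mul_le_mul_right (Ordinal.one_le_iff_ne_zero.2 h0) 2
      have hmi : 2*(i/2) < i := by
        conv_rhs => rw [hdm]
        exact lt_add_one_iff'.2 le_rfl
      have hpm : p (2*(i/2)) ≠ 0 := by
        have := (legal_self_le hp) _ hmi
        exact (lt_of_lt_of_le zero_lt_two (h2le.trans this)).ne'
      have hmem : i ∈ ((fun k => k+1) '' {k | restrictSeq p i k ≠ 0}) := by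
        refine ⟨2*(i/2), ?_, hdm.symm⟩
        rw [mem_setOf_eq, restrict_lt p hmi]
        exact hpm
      have hgr : IsGreatest ((fun k => k+1) '' {k | restrictSeq p i k ≠ 0}) i :=
        ⟨hmem, fun b hb => hS hb⟩
      rw [hiDecdef]
      simp only []
      rw [hgr.csSup_eq, max_eq_left]
      exact le_trans one_le_two (le_trans h2le hmi.le)
  -- the block index of a stage
  set xiOf : Ordinal.{u} → Ordinal.{u} := fun i => sSup {η | sf η ≤ i} with hxidef
  have hxi : ∀ ξ i, sf ξ ≤ i → i < sf (ξ+1) → xiOf i = ξ := by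
    intro ξ i h1 h2
    have hset : {η | sf η ≤ i} = Iic ξ := by
      ext η
      simp only [mem_setOf_eq, mem_Iic]
      constructor
      · intro h
        by_contra hc
        push_neg at hc
        have h3 : sf (ξ+1) ≤ sf η := sfmono.monotone (by rwa [add_one_eq_succ, Order.succ_le_iff])
        exact absurd (lt_of_lt_of_le h2 (h3.trans h)) (lt_irrefl i)
      · intro h
        exact (sfmono.monotone h).trans h1
    rw [hxidef]
    simp only []
    rw [hset, csSup_Iic]
  have hfind : ∀ i, i < L → sf (xiOf i) ≤ i ∧ i < sf (xiOf i + 1) ∧ xiOf i < κo := by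
    intro i hiL
    have hne : Set.Nonempty {η | sf η ≤ i} := ⟨0, by simp only [mem_setOf_eq, sf0]; exact (by simp)⟩
    have hbdd : BddAbove {η | sf η ≤ i} := by
      refine ⟨κo, fun η hη => ?_⟩
      by_contra hc
      push_neg at hc
      have h3 : L ≤ sf η := by rw [← sftop]; exact sfmono.monotone hc.le
      exact absurd (lt_of_lt_of_le hiL (le_trans h3 hη)) (lt_irrefl i)
    have hζle : sf (xiOf i) ≤ i := by
      rw [hxidef]; simp only []
      by_cases hmem : sSup {η | sf η ≤ i} ∈ {η | sf η ≤ i}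
      · exact hmem
      · rcases zero_or_succ_or_limit (sSup {η | sf η ≤ i}) with h0 | ⟨a, ha⟩ | hζl
        · rw [h0, sf0]; exact (by simp)
        · exfalso
          obtain ⟨t, ht, hat⟩ := exists_lt_of_lt_csSup hne (ha ▸ Order.lt_succ a)
          have h4 : t ≤ sSup {η | sf η ≤ i} := le_csSup hbdd ht
          have h5 : t = sSup {η | sf η ≤ i} :=
            le_antisymm h4 (by rw [ha, Order.succ_le_iff]; exact hat)
          exact hmem (h5 ▸ ht)
        · rw [sflimeq _ hζl]
          refine Ordinal.iSup_le_iff.2 ?_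
          rintro ⟨η', hη'⟩
          obtain ⟨t, ht, h⟩ := exists_lt_of_lt_csSup hne hη'
          exact (sfmono.monotone h.le).trans ht
    have hζκ : xiOf i < κo := by
      have h6 := lt_of_le_of_lt hζle hiL
      rw [← sftop] at h6
      exact sfmono.lt_iff_lt.1 h6
    have hζs : i < sf (xiOf i + 1) := by
      by_contra hc
      push_neg at hc
      have h7 : xiOf i + 1 ≤ xiOf i := by
        rw [hxidef]; simp only []
        exact le_csSup hbdd hc
      exact absurd h7 (not_le.2 (lt_add_one_iff'.2 le_rfl))
    exact ⟨hζle, hζs, hζκ⟩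
  -- index monotonicity for the master game
  have hidxlt : ∀ ι ι' : Ordinal.{u}, ι < ι' → sf (ι/2) + ι%2 < sf (ι'/2) + ι'%2 := by
    intro ι ι' h
    rcases pair_lt h with h1 | ⟨h1, h2⟩
    · calc sf (ι/2) + ι%2 ≤ sf (ι/2) + 1 := add_le_add_right (mod_two_le_one ι) _
        _ < sf (ι/2) + 2 := add_lt_add_right (by norm_num : (1:Ordinal.{u}) < 2) _
        _ ≤ sf (ι/2 + 1) := sfgap _
        _ ≤ sf (ι'/2) := sfmono.monotone (by rwa [add_one_eq_succ, Order.succ_le_iff])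
        _ ≤ sf (ι'/2) + ι'%2 := le_self_add
    · rw [h1]; exact add_lt_add_right h2 _
  have hidxle : ∀ ι ξ : Ordinal.{u}, ι ≤ 2*ξ → sf (ι/2) + ι%2 ≤ sf ξ := by
    intro ι ξ h
    rcases eq_or_lt_of_le h with rfl | hlt
    · rw [hdiv2, hmod2, add_zero]
    · have h3 := hidxlt ι (2*ξ) hlt
      rw [hdiv2, hmod2, add_zero] at h3
      exact h3.le
  have hidxL : ∀ ι, ι < 2*κo → sf (ι/2) + ι%2 < L := by
    intro ι hι
    have h3 := hidxlt ι (2*κo) hι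
    rwa [hdiv2, hmod2, add_zero, sftop] at h3
  -- the induced master position
  set mPlay : (Ordinal.{u} → Ordinal.{u}) → Ordinal.{u} → Ordinal.{u} :=
    fun p ι => p (sf (ι/2) + ι%2) with hmPlaydef
  have masterLegal : ∀ (p : Ordinal.{u} → Ordinal.{u}) i m, IsLegalPos lam i p →
      (∀ ι, ι < m → sf (ι/2) + ι%2 < i) → IsLegalPos lam m (mPlay p) := by
    intro p i m hp hm
    refine ⟨fun ι hι => hp.1 _ (hm ι hι),
      fun ι ι' hιι hι' => hp.2.1 _ _ (hidxlt ι ι' hιι) (hm ι' hι'), ?_⟩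
    intro ι hι hιl
    obtain ⟨hpair, hql⟩ := limit_pair hιl
    have hze : ι % 2 = 0 := limit_even hιl
    have hidxv : sf (ι/2) + ι%2 = sf (ι/2) := by rw [hze, add_zero]
    have hsfq : Order.IsSuccLimit (sf (ι/2)) := sflim _ hql
    have hlt2 : sf (ι/2) < i := by
      have := hm ι hι
      rwa [hidxv] at this
    rw [hmPlaydef]
    simp only [hidxv]
    rw [hp.2.2 _ hlt2 hsfq]
    apply le_antisymm
    · refine Ordinal.iSup_le_iff.2 ?_
      rintro ⟨t, ht⟩
      simp only []
      rw [sflimeq _ hql] at ht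
      obtain ⟨⟨η', hη'⟩, ht'⟩ := Ordinal.lt_iSup_iff.1 ht
      have h8 : p t < p (sf η') := hp.2.1 _ _ ht' (lt_trans (sfmono hη') hlt2)
      have h9 : p (sf η') = p (sf ((2*η')/2) + (2*η')%2) := by rw [hdiv2, hmod2, add_zero]
      refine le_trans h8.le ?_
      rw [h9]
      exact Ordinal.le_iSup (fun ι' : Iio ι => p (sf (ι'.1/2) + ι'.1%2))
        ⟨2*η', by rw [hpair]; exact two_mul_lt_two_mul hη'⟩
    · refine Ordinal.iSup_le_iff.2 ?_
      rintro ⟨ι', hι'⟩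
      simp only []
      have h10 : sf (ι'/2) + ι'%2 < sf (ι/2) := by
        have := hidxlt ι' ι hι'
        rwa [hidxv] at this
      exact Ordinal.le_iSup (fun t : Iio (sf (ι/2)) => p t.1) ⟨_, h10⟩
  -- full master play
  set MF : (Ordinal.{u} → Ordinal.{u}) → Ordinal.{u} → Ordinal.{u} :=
    fun p ι => if ι = 2*κo then (⨆ k : Set.Iio L, p k.1) else p (sf (ι/2) + ι%2) with hMFdef
  have hMFagree : ∀ p ι, ι < 2*κo → MF p ι = mPlay p ι := by
    intro p ι hι
    rw [hMFdef, hmPlaydef]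
    simp only [if_neg hι.ne]
  have h2κlim : Order.IsSuccLimit (2*κo) := by rw [two_mul_limit hκlim]; exact hκlim
  have mfullLegal : ∀ p, IsLegalPos lam (L + (n:ℕ)) p → IsLegalPos lam (2*κo+1) (MF p) := by
    intro p hp
    have hml : IsLegalPos lam (2*κo) (mPlay p) :=
      masterLegal p _ _ hp (fun ι hι => lt_of_lt_of_le (hidxL ι hι) hLle)
    have hml2 : IsLegalPos lam (2*κo) (MF p) :=
      legal_congr (fun j hj => (hMFagree p j hj).symm) hml
    refine legal_top hml2 h2κlim ?_ ?_
    · rw [hMFdef]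
      simp only [if_pos rfl]
      apply le_antisymm
      · refine Ordinal.iSup_le_iff.2 ?_
        rintro ⟨k, hk⟩
        simp only []
        have hkζ : (k:Ordinal) < sf κo := by rw [sftop]; exact hk
        rw [sflimeq _ hκlim] at hkζ
        obtain ⟨⟨η', hη'⟩, ht'⟩ := Ordinal.lt_iSup_iff.1 hkζ
        have h8 : p k < p (sf η') := hp.2.1 _ _ ht' (lt_of_lt_of_le (sflt _ hη') hLle)
        have h9 : MF p (2*η') = p (sf η') := by
          rw [hMFdef]
          simp only [if_neg (two_mul_lt_two_mul hη').ne, hdiv2, hmod2, add_zero]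
        refine le_trans h8.le ?_
        rw [← h9]
        exact Ordinal.le_iSup (fun ι' : Iio (2*κo) => MF p ι'.1) ⟨2*η', two_mul_lt_two_mul hη'⟩
      · refine Ordinal.iSup_le_iff.2 ?_
        rintro ⟨ι', hι'⟩
        show MF p ι' ≤ _
        rw [hMFagree p ι' hι']
        exact Ordinal.le_iSup (fun t : Iio L => p t.1) ⟨_, hidxL ι' hι'⟩
    · rw [hMFdef]
      simp only [if_pos rfl]
      exact hsup L hLle p (fun k hk => hp.1 k (lt_of_lt_of_le hk hLle))
  have blockLegal : ∀ (p : Ordinal.{u} → Ordinal.{u}) ξ, ξ < κo → IsLegalPos lam (L + (n:ℕ)) p →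
      IsLegalPos lam (blen ξ) (fun k => p ((sf ξ + 2) + k)) := by
    intro p ξ hξ hp
    refine legal_shift hp ?_
    rw [hblendef]
    simp only []
    rw [← add_assoc, hsub ξ]
    exact le_trans (add_one_le_of_lt (sflt _ (hsuccκ ξ hξ))) hLle
  -- the strategy
  set BigS : (Ordinal.{u} → Ordinal.{u}) → Ordinal.{u} := fun q =>
    if iDec q < L then
      (if iDec q = sf (xiOf (iDec q)) + 1 then
        sM (restrictSeq (fun ι => q (sf (ι/2) + ι%2)) (2*(xiOf (iDec q)) + 1))
      else
        τ (xiOf (iDec q)) (restrictSeq (fun k => q ((sf (xiOf (iDec q)) + 2) + k))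
          (iDec q - (sf (xiOf (iDec q)) + 2))))
    else (⨆ k : Set.Iio (iDec q), q k.1) + 1
    with hBigSdef
  refine ⟨BigS, ?_, ?_⟩
  · -- legality of the strategy's moves
    intro i hi hodd p hp
    rw [oddStage_iff] at hodd
    have hni : ¬ Order.IsSuccLimit i := odd_not_limit hodd
    have hdec : iDec (restrictSeq p i) = i := hiDec p i hp hodd
    have key : BigS (restrictSeq p i) < lam ∧ ∀ k, k < i → p k < BigS (restrictSeq p i) := by
      rw [hBigSdef]
      simp only []
      rw [hdec]
      by_cases hiL2 : i < L
      · rw [if_pos hiL2]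
        obtain ⟨hle1, hlt1, hξκ⟩ := hfind i hiL2
        by_cases hm : i = sf (xiOf i) + 1
        · rw [if_pos hm]
          have hstage : 2*(xiOf i)+1 < 2*κo+1 := by
            rw [add_one_eq_succ, add_one_eq_succ]
            exact Order.succ_lt_succ (two_mul_lt_two_mul hξκ)
          have hoddm : IsOddStage (2*(xiOf i)+1) := oddStage_iff.2 (pair_mod _ one_lt_two)
          have hidxi : ∀ ι, ι < 2*(xiOf i)+1 → sf (ι/2) + ι%2 < i := by
            intro ι hι
            calc sf (ι/2)+ι%2 ≤ sf (xiOf i) := hidxle ι _ (lt_add_one_iff'.1 hι)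
              _ < i := by conv_rhs => rw [hm]
                          exact lt_add_one_iff'.2 le_rfl
          have hMi : IsLegalPos lam (2*(xiOf i)+1) (mPlay p) := masterLegal p i _ hp hidxi
          have hkey := hsM1 _ hstage hoddm (mPlay p) hMi
          obtain ⟨hw1, hw2⟩ := legal_extend_rev hkey
          have hresteq : restrictSeq (fun ι => restrictSeq p i (sf (ι/2) + ι%2)) (2*(xiOf i)+1)
              = restrictSeq (mPlay p) (2*(xiOf i)+1) := by
            funext ι
            simp only [restrictSeq, hmPlaydef]
            by_cases hι : ι < 2*(xiOf i)+1
            · rw [if_pos hι, if_pos hι, if_pos (hidxi ι hι)]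
            · rw [if_neg hι, if_neg hι]
          rw [hresteq]
          refine ⟨hw1, ?_⟩
          intro k hk
          have hmm : sf (xiOf i) < i := by
            conv_rhs => rw [hm]
            exact lt_add_one_iff'.2 le_rfl
          have hkle : k ≤ sf (xiOf i) := by
            have hk2 : k < sf (xiOf i) + 1 := by rw [← hm]; exact hk
            exact lt_add_one_iff'.1 hk2
          have h12 : p k ≤ p (sf (xiOf i)) := legal_le hp hkle hmm
          have h14 := hw2 (2*(xiOf i)) (lt_add_one_iff'.2 le_rfl)
          rw [hmPlaydef] at h14
          simp only [hdiv2, hmod2, add_zero] at h14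
          exact lt_of_le_of_lt h12 h14
        · rw [if_neg hm]
          have hne : sf (xiOf i) ≠ i := by
            intro h
            rw [← h, sfeven] at hodd
            exact one_ne_zero hodd.symm
          have hj : sf (xiOf i) + (i - sf (xiOf i)) = i := Ordinal.add_sub_cancel_of_le hle1
          have hjodd : (i - sf (xiOf i)) % 2 = 1 := by
            have h20 := even_translate (sfeven (xiOf i)) (i - sf (xiOf i))
            rw [hj] at h20
            rw [← h20]
            exact hodd
          have hj2 : (2:Ordinal) ≤ i - sf (xiOf i) := by
            by_contra hc
            push_neg at hc
            have h21 : i - sf (xiOf i) ≤ 1 := by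
              have h2s : (2:Ordinal) = Order.succ 1 := by rw [← add_one_eq_succ]; norm_num
              rw [h2s, Order.lt_succ_iff] at hc
              exact hc
            rcases Ordinal.le_one_iff.1 h21 with h0 | h1
            · rw [h0, add_zero] at hj
              exact hne hj
            · rw [h1] at hj
              exact hm hj.symm
          have hs2le : sf (xiOf i) + 2 ≤ i := by
            calc sf (xiOf i) + 2 ≤ sf (xiOf i) + (i - sf (xiOf i)) := add_le_add_right hj2 _
              _ = i := hj
          have hj' : (sf (xiOf i) + 2) + (i - (sf (xiOf i) + 2)) = i :=
            Ordinal.add_sub_cancel_of_le hs2le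
          have hjlt : i - (sf (xiOf i) + 2) < blen (xiOf i) := by
            have h15 : (sf (xiOf i)+2) + (i - (sf (xiOf i)+2))
                < (sf (xiOf i)+2) + (sf (xiOf i+1) - (sf (xiOf i)+2)) := by
              rw [hj', hsub]
              exact hlt1
            have h16 := (add_lt_add_iff_left (sf (xiOf i) + 2)).1 h15
            rw [hblendef]
            simp only []
            exact lt_of_lt_of_le h16 (le_self_add)
          have he2 : (sf (xiOf i) + 2) % 2 = 0 := by
            rw [even_translate (sfeven (xiOf i)) 2]
            exact mod_self 2
          have hjodd' : (i - (sf (xiOf i) + 2)) % 2 = 1 := by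
            have h20 := even_translate he2 (i - (sf (xiOf i) + 2))
            rw [hj'] at h20
            rw [← h20]
            exact hodd
          have hBi : IsLegalPos lam (i - (sf (xiOf i) + 2)) (fun k => p ((sf (xiOf i) + 2) + k)) :=
            legal_shift hp (le_of_eq hj')
          have hkey := (hτ (xiOf i) hξκ).1 _ hjlt (oddStage_iff.2 hjodd') _ hBi
          obtain ⟨hw1, hw2⟩ := legal_extend_rev hkey
          have hresteq : restrictSeq (fun k => restrictSeq p i ((sf (xiOf i) + 2) + k))
                (i - (sf (xiOf i) + 2))
              = restrictSeq (fun k => p ((sf (xiOf i) + 2) + k)) (i - (sf (xiOf i) + 2)) := by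
            funext k
            simp only [restrictSeq]
            by_cases hk : k < i - (sf (xiOf i) + 2)
            · have hik : (sf (xiOf i) + 2) + k < i := by
                conv_rhs => rw [← hj']
                exact add_lt_add_right hk _
              rw [if_pos hk, if_pos hk, if_pos hik]
            · rw [if_neg hk, if_neg hk]
          rw [hresteq]
          refine ⟨hw1, ?_⟩
          intro k hk
          have hj'pos : (0:Ordinal) < i - (sf (xiOf i) + 2) := by
            rcases eq_or_ne (i - (sf (xiOf i)+2)) 0 with h0 | h0
            · rw [h0] at hjodd'
              simp at hjodd'
            · exact pos_iff_ne_zero.2 h0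
          have hsi : sf (xiOf i) + 2 < i := by
            calc sf (xiOf i) + 2 = (sf (xiOf i) + 2) + 0 := (add_zero _).symm
              _ < (sf (xiOf i) + 2) + (i - (sf (xiOf i) + 2)) := add_lt_add_right hj'pos _
              _ = i := hj'
          rcases lt_or_ge k (sf (xiOf i) + 2) with hks | hks
          · have h15 : p k ≤ p (sf (xiOf i) + 2) := legal_le hp hks.le hsi
            have h18 := hw2 0 hj'pos
            simp only [add_zero] at h18
            exact lt_of_le_of_lt h15 h18
          · have hkk : (sf (xiOf i) + 2) + (k - (sf (xiOf i) + 2)) = k :=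
              Ordinal.add_sub_cancel_of_le hks
            have h16 : k - (sf (xiOf i) + 2) < i - (sf (xiOf i) + 2) := by
              rw [← add_lt_add_iff_left (sf (xiOf i) + 2), hkk, hj']
              exact hk
            have h17 := hw2 _ h16
            rwa [hkk] at h17
      · rw [if_neg hiL2]
        have hsupeq : (⨆ k : Iio i, restrictSeq p i k.1) = ⨆ k : Iio i, p k.1 :=
          iSup_congr fun k => restrict_lt p k.2
        have hslt2 : (⨆ k : Iio i, p k.1) < lam := hsup i (le_of_lt hi) p (fun k hk => hp.1 k hk)
        constructor
        · rw [hsupeq, add_one_eq_succ]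
          exact hlam.succ_lt hslt2
        · intro k hk
          have h19 : p k ≤ ⨆ k' : Iio i, p k'.1 :=
            Ordinal.le_iSup (fun k' : Iio i => p k'.1) ⟨k, hk⟩
          rw [hsupeq]
          exact lt_of_le_of_lt h19 (lt_add_one_iff'.2 le_rfl)
    exact legal_extend hp hni key.1 key.2
  · -- the winning condition
    intro p hp hfollow i hi hilim hcof
    have hnotlim2 : ∀ β : Ordinal.{u}, ¬ Order.IsSuccLimit (β + 2) := by
      intro β hcon
      have hs : β + 2 = Order.succ (β+1) := by rw [← add_one_eq_succ, add_assoc]; norm_num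
      rw [hs] at hcon
      exact lt_irrefl _ (hcon.succ_lt (Order.lt_succ _))
    have hMFlegal : IsLegalPos lam (2*κo+1) (MF p) := mfullLegal p hp
    have hMFfollow : ∀ ι, ι < 2*κo+1 → IsOddStage ι → MF p ι = sM (restrictSeq (MF p) ι) := by
      intro ι hι hoddι
      rw [oddStage_iff] at hoddι
      obtain ⟨η, rfl⟩ : ∃ η, ι = 2*η+1 := ⟨ι/2, odd_eq_succ hoddι⟩
      have hηκ : η < κo := by
        by_contra hc
        push_neg at hc
        have h1 : 2*κo ≤ 2*η := mul_le_mul_right hc 2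
        have h2 : 2*η+1 ≤ 2*κo := lt_add_one_iff'.1 hι
        have h3 : 2*η < 2*η+1 := lt_add_one_iff'.2 le_rfl
        exact absurd (lt_of_le_of_lt h1 (lt_of_lt_of_le h3 h2)) (lt_irrefl _)
      have hne2κ : 2*η+1 ≠ 2*κo := by
        intro hcon
        have hc1 : (2*η+1) % 2 = 1 := pair_mod η one_lt_two
        rw [hcon, hmod2] at hc1
        exact one_ne_zero hc1.symm
      have hi'odd : (sf η + 1) % 2 = 1 := by
        rw [even_translate (sfeven η) 1]
        exact mod_eq_of_lt one_lt_two
      have hsfηL : sf η < L := sflt η hηκ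
      have hi'L : sf η + 1 < L := by rw [add_one_eq_succ]; exact hL.succ_lt hsfηL
      have hi'Ln : sf η + 1 < L + (n:ℕ) := lt_of_lt_of_le hi'L hLle
      have hfol := hfollow (sf η + 1) hi'Ln (oddStage_iff.2 hi'odd)
      have hdec : iDec (restrictSeq p (sf η + 1)) = sf η + 1 :=
        hiDec p _ (legal_mono hp hi'Ln.le) hi'odd
      have hxieq : xiOf (sf η + 1) = η := by
        refine hxi η _ (le_self_add) ?_
        exact lt_of_lt_of_le (add_lt_add_right (by norm_num : (1:Ordinal.{u}) < 2) _) (sfgap η)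
      rw [hBigSdef] at hfol
      simp only [] at hfol
      rw [hdec, if_pos hi'L, hxieq, if_pos rfl] at hfol
      have hMFι : MF p (2*η+1) = p (sf η + 1) := by
        rw [hMFdef]
        simp only []
        rw [if_neg hne2κ, pair_div η one_lt_two, pair_mod η one_lt_two]
      have hidxin : ∀ ι'', ι'' < 2*η+1 → sf (ι''/2) + ι''%2 < sf η + 1 := by
        intro ι'' hι''
        calc sf (ι''/2)+ι''%2 ≤ sf η := hidxle ι'' η (lt_add_one_iff'.1 hι'')
          _ < sf η + 1 := lt_add_one_iff'.2 le_rfl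
      have hargeq : restrictSeq (fun ι'' => restrictSeq p (sf η + 1) (sf (ι''/2) + ι''%2)) (2*η+1)
          = restrictSeq (MF p) (2*η+1) := by
        funext ι''
        simp only [restrictSeq, hMFdef]
        by_cases hι'' : ι'' < 2*η+1
        · have hne'' : ι'' ≠ 2*κo := by
            intro hcon
            have : 2*κo < 2*κo := by
              calc 2*κo = ι'' := hcon.symm
                _ < 2*η+1 := hι''
                _ ≤ 2*κo := lt_add_one_iff'.1 hι
            exact absurd this (lt_irrefl _)
          rw [if_pos hι'', if_pos hι'', if_pos (hidxin ι'' hι''), if_neg hne'']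
        · rw [if_neg hι'', if_neg hι'']
      rw [hMFι, hfol, hargeq]
    have hMA := hsM2 (MF p) hMFlegal (fun ι hι ho => hMFfollow ι hι ho)
    have hBfollow : ∀ ξ, ξ < κo → ∀ k, k < blen ξ → IsOddStage k →
        p ((sf ξ + 2) + k) = τ ξ (restrictSeq (fun k' => p ((sf ξ + 2) + k')) k) := by
      intro ξ hξ k hk hoddk
      rw [oddStage_iff] at hoddk
      have he2 : (sf ξ + 2) % 2 = 0 := by
        rw [even_translate (sfeven ξ) 2]
        exact mod_self 2
      have hi'odd : ((sf ξ + 2) + k) % 2 = 1 := by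
        rw [even_translate he2 k]
        exact hoddk
      have hδeven : (sf (ξ+1) - (sf ξ + 2)) % 2 = 0 := by
        have h20 := even_translate he2 (sf (ξ+1) - (sf ξ + 2))
        rw [hsub ξ] at h20
        rw [← h20]
        exact sfeven _
      have hkδ : k < sf (ξ+1) - (sf ξ + 2) := by
        have hk2 : k < (sf (ξ+1) - (sf ξ+2)) + 1 := by
          rw [hblendef] at hk
          exact hk
        rcases eq_or_lt_of_le (lt_add_one_iff'.1 hk2) with rfl | h
        · exfalso
          rw [hδeven] at hoddk
          exact one_ne_zero hoddk.symm
        · exact h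
      have hi'lt : (sf ξ + 2) + k < sf (ξ+1) := by
        rw [← hsub ξ]
        exact add_lt_add_right hkδ _
      have hi'L : (sf ξ + 2) + k < L := lt_trans hi'lt (sflt _ (hsuccκ ξ hξ))
      have hi'Ln : (sf ξ + 2) + k < L + (n:ℕ) := lt_of_lt_of_le hi'L hLle
      have hfol := hfollow _ hi'Ln (oddStage_iff.2 hi'odd)
      have hdec : iDec (restrictSeq p ((sf ξ + 2) + k)) = (sf ξ + 2) + k :=
        hiDec p _ (legal_mono hp hi'Ln.le) hi'odd
      have hsfξi' : sf ξ ≤ (sf ξ + 2) + k :=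
        le_trans (le_self_add : sf ξ ≤ sf ξ + 2) (le_self_add : sf ξ + 2 ≤ sf ξ + 2 + k)
      have hxieq : xiOf ((sf ξ + 2) + k) = ξ := hxi ξ _ hsfξi' hi'lt
      have hm : (sf ξ + 2) + k ≠ sf ξ + 1 := by
        intro hcon
        have h1 : sf ξ + 2 ≤ sf ξ + 1 := hcon ▸ (le_self_add : sf ξ + 2 ≤ sf ξ + 2 + k)
        have h2 : sf ξ + 1 < sf ξ + 2 := add_lt_add_right (by norm_num : (1:Ordinal.{u}) < 2) _
        exact absurd (lt_of_le_of_lt h1 h2) (lt_irrefl _)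
      have hsubk : ((sf ξ + 2) + k) - (sf ξ + 2) = k := Ordinal.add_sub_cancel _ k
      rw [hBigSdef] at hfol
      simp only [] at hfol
      rw [hdec, if_pos hi'L, hxieq, if_neg hm, hsubk] at hfol
      have hargeq : restrictSeq (fun k' => restrictSeq p ((sf ξ + 2) + k) ((sf ξ + 2) + k')) k
          = restrictSeq (fun k' => p ((sf ξ + 2) + k')) k := by
        funext k'
        simp only [restrictSeq]
        by_cases hk' : k' < k
        · rw [if_pos hk', if_pos hk', if_pos (add_lt_add_right hk' (sf ξ + 2))]
        · rw [if_neg hk', if_neg hk']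
      rw [hfol, hargeq]
    have hBA : ∀ ξ, ξ < κo → ∀ k, k < blen ξ → Order.IsSuccLimit k → k.cof ∈ x →
        p ((sf ξ + 2) + k) ∈ A := by
      intro ξ hξ k hk hkl hkc
      exact (hτ ξ hξ).2 _ (blockLegal p ξ hξ hp)
        (fun k' hk' ho' => hBfollow ξ hξ k' hk' ho') k hk hkl hkc
    rcases lt_or_ge i L with hiL | hiL
    · obtain ⟨hle1, hlt1, hξκ⟩ := hfind i hiL
      rcases eq_or_lt_of_le hle1 with heq | hlt0
      · rcases zero_or_succ_or_limit (xiOf i) with h0 | ⟨ζ, hζ⟩ | hξlim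
        · exfalso
          rw [h0, sf0] at heq
          exact hilim.pos.ne' heq.symm
        · have hζκ : ζ < κo := lt_trans (Order.lt_succ ζ) (hζ ▸ hξκ)
          have hieq : (sf ζ + 2) + (sf (ζ+1) - (sf ζ + 2)) = i := by
            rw [hsub]
            rw [add_one_eq_succ, ← hζ]
            exact heq
          have hδlim : Order.IsSuccLimit (sf (ζ+1) - (sf ζ + 2)) := by
            rcases Ordinal.isSuccLimit_add_iff.1 (hieq ▸ hilim) with h | ⟨h0, hlim2⟩
            · exact h
            · exact absurd hlim2 (hnotlim2 (sf ζ))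
          have hklt : sf (ζ+1) - (sf ζ + 2) < blen ζ := by
            rw [hblendef]
            exact lt_add_one_iff'.2 le_rfl
          have hcof2 : (sf (ζ+1) - (sf ζ + 2)).cof = i.cof := by
            conv_rhs => rw [← hieq]
            exact (cof_map_of_isNormal (isNormal_add_right (sf ζ + 2)) hδlim).symm
          have hmem := hBA ζ hζκ _ hklt hδlim (by rw [hcof2]; exact hcof)
          rwa [hieq] at hmem
        · have hι2κ : 2*(xiOf i) < 2*κo+1 :=
            lt_trans (two_mul_lt_two_mul hξκ) (lt_add_one_iff'.2 le_rfl)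
          have hιlim : Order.IsSuccLimit (2*(xiOf i)) := by
            rw [two_mul_limit hξlim]
            exact hξlim
          have hcofι : (2*(xiOf i)).cof = i.cof := by
            rw [two_mul_limit hξlim]
            conv_rhs => rw [← heq]
            exact (cof_map_of_isNormal sfnorm hξlim).symm
          have hmem := hMA (2*(xiOf i)) hι2κ hιlim (by rw [hcofι]; exact hcof)
          have hMFv : MF p (2*(xiOf i)) = p i := by
            rw [hMFdef]
            simp only []
            rw [if_neg (two_mul_lt_two_mul hξκ).ne, hdiv2, hmod2, add_zero, heq]
          rwa [hMFv] at hmem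
      · have hs2lt : sf (xiOf i) + 2 < i := by
          have h21 := add_nat_lt hlt0 hilim 2
          simpa using h21
        have hkeq : (sf (xiOf i) + 2) + (i - (sf (xiOf i) + 2)) = i :=
          Ordinal.add_sub_cancel_of_le hs2lt.le
        have hklim : Order.IsSuccLimit (i - (sf (xiOf i) + 2)) := by
          rcases Ordinal.isSuccLimit_add_iff.1 (hkeq ▸ hilim) with h | ⟨h0, hlim2⟩
          · exact h
          · exact absurd hlim2 (hnotlim2 (sf (xiOf i)))
        have hklt : i - (sf (xiOf i) + 2) < blen (xiOf i) := by
          have h15 : (sf (xiOf i)+2) + (i - (sf (xiOf i)+2))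
              < (sf (xiOf i)+2) + (sf (xiOf i+1) - (sf (xiOf i)+2)) := by
            rw [hkeq, hsub]
            exact hlt1
          have h16 := (add_lt_add_iff_left _).1 h15
          rw [hblendef]
          exact lt_trans h16 (lt_add_one_iff'.2 le_rfl)
        have hcof2 : (i - (sf (xiOf i) + 2)).cof = i.cof := by
          conv_rhs => rw [← hkeq]
          exact (cof_map_of_isNormal (isNormal_add_right _) hklim).symm
        have hmem := hBA (xiOf i) hξκ _ hklt hklim (by rw [hcof2]; exact hcof)
        rwa [hkeq] at hmem
    · have hieqL : i = L := by
        have h1 : L + (i - L) = i := Ordinal.add_sub_cancel_of_le hiL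
        have h2 : i - L < (n:ℕ) := by
          rw [← add_lt_add_iff_left L, h1]
          exact hi
        obtain ⟨m, hm⟩ := lt_omega0.1 (lt_trans h2 (nat_lt_omega0 n))
        rcases Nat.eq_zero_or_pos m with h0 | hpos
        · rw [h0, Nat.cast_zero] at hm
          rw [hm, add_zero] at h1
          exact h1.symm
        · exfalso
          have hm1 : (m:Ordinal) = ((m-1:ℕ):Ordinal) + 1 := by
            have : m = (m-1) + 1 := (Nat.succ_pred_eq_of_pos hpos).symm
            conv_lhs => rw [this]
            push_cast
            ring_nf
          have hieq2 : i = (L + ((m-1:ℕ):Ordinal)) + 1 := by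
            rw [← h1, hm, hm1, add_assoc]
          rw [hieq2, add_one_eq_succ] at hilim
          exact lt_irrefl _ (hilim.succ_lt (Order.lt_succ _))
      have h2κ : 2*κo < 2*κo+1 := lt_add_one_iff'.2 le_rfl
      have hcofι : (2*κo).cof = i.cof := by
        rw [two_mul_limit hκlim, hieqL, hκdef]
        exact Ordinal.cof_cof L
      have hmem := hMA (2*κo) h2κ h2κlim (by rw [hcofι]; exact hcof)
      have hMFtop : MF p (2*κo) = p i := by
        rw [hMFdef]
        simp only [if_pos rfl]
        rw [hieqL]
        have hLlt : L < L + (n:ℕ) := by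
          have h30 := hi
          rw [hieqL] at h30
          exact h30
        exact (hp.2.2 L hLlt hL).symm
      rwa [hMFtop] at hmem

end CubAux

/-- If `λ = μ⁺` and player II wins `𝔊^x_ε(A, λ)` for every `ε < μ` (and, in case `μ` is
regular, also the game of length `μ + 1`), then player II wins `𝔊^x_σ(A, λ)` for every
`σ < λ`. -/
theorem stmt6 (μ : Cardinal) (hinf : ℵ₀ ≤ μ) (A : Set Ordinal)
    (hA : A ⊆ Set.Iio (Order.succ μ).ord) (x : Set Cardinal)
    (hx : ∀ c ∈ x, c.IsRegular ∧ c.ord < (Order.succ μ).ord)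
    (h1 : ∀ eps < μ.ord, IIWinsCubGame x eps (Order.succ μ).ord A)
    (h2 : μ.IsRegular → IIWinsCubGame x (μ.ord + 1) (Order.succ μ).ord A) :
    ∀ σo < (Order.succ μ).ord, IIWinsCubGame x σo (Order.succ μ).ord A := by
  intro σo
  induction σo using Ordinal.induction with
  | _ σo IH =>
    intro hσ
    by_cases hσμ : σo < μ.ord
    · exact h1 σo hσμ
    · push_neg at hσμ
      have hω : Ordinal.omega0 ≤ σo := by
        refine le_trans ?_ hσμ
        rw [← Cardinal.ord_aleph0]
        exact Cardinal.ord_le_ord.2 hinf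
      obtain ⟨n, hn⟩ := Ordinal.lt_omega0.1 (Ordinal.mod_lt σo Ordinal.omega0_ne_zero)
      have hLn : Ordinal.omega0 * (σo / Ordinal.omega0) + (n:ℕ) = σo := by
        rw [← hn]
        exact Ordinal.div_add_mod σo Ordinal.omega0
      have hq0 : σo / Ordinal.omega0 ≠ 0 := by
        intro h0
        rw [h0, mul_zero, zero_add] at hLn
        exact absurd (hLn ▸ Ordinal.nat_lt_omega0 n) (not_lt.2 hω)
      have hL : Order.IsSuccLimit (Ordinal.omega0 * (σo / Ordinal.omega0)) :=
        Ordinal.isSuccLimit_mul_left Ordinal.isSuccLimit_omega0 (pos_iff_ne_zero.2 hq0)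
      have hLles : Ordinal.omega0 * (σo / Ordinal.omega0) ≤ σo := by
        conv_rhs => rw [← hLn]
        exact le_self_add
      have hlamlim : Order.IsSuccLimit ((Order.succ μ).ord) :=
        Cardinal.isSuccLimit_ord (hinf.trans (Order.le_succ μ))
      have hcoflam : (Order.succ μ).ord.cof = Order.succ μ := (Cardinal.isRegular_succ hinf).cof_eq
      have hsup : ∀ i', i' ≤ Ordinal.omega0 * (σo / Ordinal.omega0) + (n:ℕ) →
          ∀ p : Ordinal → Ordinal, (∀ k, k < i' → p k < (Order.succ μ).ord) →
          (⨆ k : Set.Iio i', p k.1) < (Order.succ μ).ord := by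
        intro i' hi' p hbd
        refine Ordinal.lift_iSup_lt_of_lt_cof ?_ (fun k => hbd k.1 k.2)
        simp only [Cardinal.mk_Iio_ordinal, Cardinal.lift_lift, ← Ordinal.lift_cof, Cardinal.lift_lt]
        rw [hcoflam]
        rw [hLn] at hi'
        exact Cardinal.lt_ord.1 (lt_of_le_of_lt hi' hσ)
      have hκord : Order.IsSuccLimit (((Ordinal.omega0 * (σo / Ordinal.omega0)).cof).ord) :=
        Cardinal.isSuccLimit_ord (Ordinal.aleph0_le_cof.2 hL)
      have hmaster : IIWinsCubGame x (2 * (Ordinal.omega0 * (σo / Ordinal.omega0)).cof.ord + 1)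
          (Order.succ μ).ord A := by
        rw [CubAux.two_mul_limit hκord]
        have hκμ : (Ordinal.omega0 * (σo / Ordinal.omega0)).cof ≤ μ := by
          have h1' := Ordinal.cof_le_card (Ordinal.omega0 * (σo / Ordinal.omega0))
          have h2' : (Ordinal.omega0 * (σo / Ordinal.omega0)).card ≤ σo.card :=
            Ordinal.card_le_card hLles
          have h3' : σo.card < Order.succ μ := Cardinal.lt_ord.1 hσ
          exact Order.lt_succ_iff.1 (lt_of_le_of_lt (h1'.trans h2') h3')
        rcases eq_or_lt_of_le hκμ with heq | hlt
        · have hreg : μ.IsRegular := by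
            rw [← heq]
            exact ⟨Ordinal.aleph0_le_cof.2 hL, le_of_eq (Ordinal.cof_cof _).symm⟩
          rw [heq]
          exact h2 hreg
        · refine h1 _ ?_
          rw [Ordinal.add_one_eq_succ]
          exact (Cardinal.isSuccLimit_ord hinf).succ_lt (Cardinal.ord_lt_ord.2 hlt)
      have hblock : ∀ ε, ε < Ordinal.omega0 * (σo / Ordinal.omega0) →
          IIWinsCubGame x ε (Order.succ μ).ord A := by
        intro ε hε
        have hεσ : ε < σo := lt_of_lt_of_le hε hLles
        exact IH ε hεσ (lt_trans hεσ hσ)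
      have hfin := CubAux.compose hL hlamlim hsup hmaster hblock
      rwa [hLn] at hfin
end

section
/- Let κ < λ be regular cardinals and suppose E ⊆ λ ∩ Cof(κ) is a nonreflecting stationary subset of λ (i.e., E ∩ α is nonstationary in α for every α < λ). Then there is a family ⟨a_δ : δ ∈ E⟩, where each a_δ : κ → δ enumerates an increasing cofinal sequence in δ, which is almost free but not free in the transversal sense: every subfamily indexed by a proper initial segment of E admits a system ⟨b_δ⟩ of restrictions of the a_δ to co-bounded subsets of κ with pairwise disjoint ranges, but no such system exists for the whole family. -/
open Cardinal Set

/-- `S` is stationary in the (limit) ordinal `o`. -/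
def IsStationaryIn (S : Set Ordinal) (o : Ordinal) : Prop :=
  Order.IsSuccLimit o ∧ ∀ C : Set Ordinal, IsClubIn C o → (S ∩ C).Nonempty

/-- There is a system assigning to each `δ ∈ s` a restriction `b_δ` of `a δ` to a
co-bounded subset of `κo` such that the ranges are pairwise disjoint (a transversal
in the NRT sense). -/
def CobddDisjointSystem (κo : Ordinal) (a : Ordinal → Ordinal → Ordinal)
    (s : Set Ordinal) : Prop :=
  ∃ D : Ordinal → Set Ordinal,
    (∀ δ ∈ s, D δ ⊆ Set.Iio κo ∧ ∃ ζ < κo, ∀ ξ, ζ ≤ ξ → ξ < κo → ξ ∈ D δ) ∧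
    (∀ δ ∈ s, ∀ δ' ∈ s, δ ≠ δ' → ∀ ξ ∈ D δ, ∀ ξ' ∈ D δ', a δ ξ ≠ a δ' ξ')

private lemma cobdd_mono {κo : Ordinal} {a : Ordinal → Ordinal → Ordinal}
    {s t : Set Ordinal} (hst : s ⊆ t) (h : CobddDisjointSystem κo a t) :
    CobddDisjointSystem κo a s := by
  obtain ⟨D, h1, h2⟩ := h
  exact ⟨D, fun δ hδ => h1 δ (hst hδ), fun δ hδ δ' hδ' => h2 δ (hst hδ) δ' (hst hδ')⟩

/-- If `κ < λ` are regular and `E ⊆ λ ∩ Cof(κ)` is a nonreflecting stationary set,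
then there is a family `⟨a_δ : δ ∈ E⟩` of increasing cofinal enumerations `a_δ : κ → δ`
which is almost free (every subfamily indexed by a proper initial segment of `E` has
a transversal of co-bounded restrictions with pairwise disjoint ranges) but has no
such transversal on all of `E`. -/
theorem stmt11 (κ lam : Cardinal) (hκ : κ.IsRegular) (hlam : lam.IsRegular)
    (hlt : κ < lam) (E : Set Ordinal)
    (hE : E ⊆ {α : Ordinal | α < lam.ord ∧ α.cof = κ})
    (hstat : IsStationaryIn E lam.ord)
    (hnonrefl : ∀ α < lam.ord, ¬ IsStationaryIn (E ∩ Set.Iio α) α) :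
    ∃ a : Ordinal → Ordinal → Ordinal,
      (∀ δ ∈ E,
        (∀ ξ η : Ordinal, ξ < η → η < κ.ord → a δ ξ < a δ η) ∧
        (∀ ξ < κ.ord, a δ ξ < δ) ∧
        (∀ b < δ, ∃ ξ < κ.ord, b < a δ ξ)) ∧
      (∀ γ < lam.ord, CobddDisjointSystem κ.ord a (E ∩ Set.Iio γ)) ∧
      ¬ CobddDisjointSystem κ.ord a E := by
  classical
  have hκo : Order.IsSuccLimit κ.ord := Cardinal.isSuccLimit_ord hκ.aleph0_le
  have hlo : Order.IsSuccLimit lam.ord := Cardinal.isSuccLimit_ord hlam.aleph0_le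
  have hlt1 : ∀ x : Ordinal, x < x + 1 := by
    intro x; rw [Ordinal.add_one_eq_succ]; exact Order.lt_succ x
  have hsuccκ : ∀ {x : Ordinal}, x < κ.ord → x + 1 < κ.ord := by
    intro x hx; rw [Ordinal.add_one_eq_succ]; exact hκo.succ_lt hx
  have hsucclo : ∀ {x : Ordinal}, x < lam.ord → x + 1 < lam.ord := by
    intro x hx; rw [Ordinal.add_one_eq_succ]; exact hlo.succ_lt hx
  -- construct the family `a`
  have hfs : ∀ δ : Ordinal, ∃ g : Ordinal → Ordinal, δ ∈ E →
      ((∀ ξ η : Ordinal, ξ < η → η < κ.ord → g ξ < g η) ∧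
       (∀ ξ < κ.ord, g ξ < δ) ∧ (∀ b < δ, ∃ ξ < κ.ord, b < g ξ)) := by
    intro δ
    by_cases hδ : δ ∈ E
    · obtain ⟨f, hf⟩ := Ordinal.exists_fundamental_sequence δ
      have hco : δ.cof.ord = κ.ord := by rw [(hE hδ).2]
      refine ⟨fun ξ => if h : ξ < δ.cof.ord then f ξ h else 0, fun _ => ⟨?_, ?_, ?_⟩⟩
      · intro ξ η hξη hη
        rw [← hco] at hη
        dsimp only
        rw [dif_pos (hξη.trans hη), dif_pos hη]
        exact hf.2.1 _ _ hξη
      · intro ξ hξ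
        rw [← hco] at hξ
        dsimp only
        rw [dif_pos hξ]
        exact hf.lt hξ
      · intro b hb
        rw [← hf.blsub_eq] at hb
        obtain ⟨i, hi, hbi⟩ := Ordinal.lt_blsub_iff.1 hb
        have hi1 : i + 1 < δ.cof.ord := by rw [hco] at hi ⊢; exact hsuccκ hi
        refine ⟨i + 1, by rw [← hco]; exact hi1, ?_⟩
        dsimp only
        rw [dif_pos hi1]
        exact hbi.trans_lt (hf.2.1 hi hi1 (hlt1 i))
    · exact ⟨fun _ => 0, fun h => absurd h hδ⟩
  choose a ha using hfs
  have hainj : ∀ δ ∈ E, ∀ ξ < κ.ord, ∀ ξ' < κ.ord, a δ ξ = a δ ξ' → ξ = ξ' := by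
    intro δ hδ ξ hξ ξ' hξ' heq
    rcases lt_trichotomy ξ ξ' with h | h | h
    · exact absurd heq (ne_of_lt ((ha δ hδ).1 ξ ξ' h hξ'))
    · exact h
    · exact absurd heq.symm (ne_of_lt ((ha δ hδ).1 ξ' ξ h hξ))
  -- almost freeness
  have hfree : ∀ γ, γ < lam.ord → CobddDisjointSystem κ.ord a (E ∩ Set.Iio γ) := by
    intro γ
    induction γ using Ordinal.induction with
    | h γ IH =>
    intro hγ
    rcases Ordinal.zero_or_succ_or_isSuccLimit γ with rfl | ⟨β, rfl⟩ | hlim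
    · exact ⟨fun _ => Set.Iio κ.ord, fun δ hδ => absurd hδ.2 (not_lt_zero (a := δ)),
        fun δ hδ => absurd hδ.2 (not_lt_zero (a := δ))⟩
    · -- successor case
      have hβγ : β < Order.succ β := Order.lt_succ β
      have hβlo : β < lam.ord := hβγ.trans hγ
      by_cases hβE : β ∈ E
      · obtain ⟨D, hD1, hD2⟩ := IH β hβγ hβlo
        refine ⟨fun δ => if δ = β then Set.Iio κ.ord
            else D δ ∩ {ξ | ∀ ξ'' < κ.ord, a δ ξ ≠ a β ξ''}, ?_, ?_⟩
        · rintro δ ⟨hδE, hδlt⟩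
          dsimp only
          by_cases hd : δ = β
          · rw [if_pos hd]
            exact ⟨fun x hx => hx, 0, hκo.pos, fun ξ _ hξ => hξ⟩
          · rw [if_neg hd]
            have hδβ : δ < β := lt_of_le_of_ne (Order.lt_succ_iff.1 hδlt) hd
            have hmem : δ ∈ E ∩ Set.Iio β := ⟨hδE, hδβ⟩
            obtain ⟨hsub, ζ1, hζ1, htail1⟩ := hD1 δ hmem
            obtain ⟨ζ0, hζ0, hδζ0⟩ := (ha β hβE).2.2 δ hδβ
            -- choice of collision witnesses
            have hchoice : ∀ ξ'' : Ordinal, ∃ ξo : Ordinal, ξo < κ.ord ∧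
                ((∃ ξ, ξ < κ.ord ∧ a δ ξ = a β ξ'') → a δ ξo = a β ξ'') := by
              intro ξ''
              by_cases hh : ∃ ξ, ξ < κ.ord ∧ a δ ξ = a β ξ''
              · obtain ⟨ξ, h1, h2⟩ := hh
                exact ⟨ξ, h1, fun _ => h2⟩
              · exact ⟨0, hκo.pos, fun h => absurd h hh⟩
            choose hfun hh1 hh2 using hchoice
            have hB : Ordinal.bsup ζ0 (fun ξ'' _ => hfun ξ'') < κ.ord :=
              Cardinal.bsup_lt_ord_of_isRegular hκ (Cardinal.lt_ord.1 hζ0) fun i _ => hh1 i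
            refine ⟨fun x hx => hsub hx.1,
              max ζ1 (Ordinal.bsup ζ0 (fun ξ'' _ => hfun ξ'') + 1), max_lt hζ1 (hsuccκ hB), ?_⟩
            intro ξ hξle hξ
            refine ⟨htail1 ξ ((le_max_left _ _).trans hξle) hξ, ?_⟩
            intro ξ'' hξ'' heq
            rcases lt_or_ge ξ'' ζ0 with hlt' | hge'
            · have hex : ∃ ξ, ξ < κ.ord ∧ a δ ξ = a β ξ'' := ⟨ξ, hξ, heq⟩
              have h1 : a δ (hfun ξ'') = a β ξ'' := hh2 ξ'' hex
              have h2 : hfun ξ'' = ξ := hainj δ hδE _ (hh1 ξ'') ξ hξ (by rw [h1, heq])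
              have h3 : hfun ξ'' ≤ Ordinal.bsup ζ0 (fun ξ'' _ => hfun ξ'') :=
                Ordinal.le_bsup _ ξ'' hlt'
              have h4 : ξ < Ordinal.bsup ζ0 (fun ξ'' _ => hfun ξ'') + 1 := by
                rw [← h2]; exact lt_of_le_of_lt h3 (hlt1 _)
              exact absurd ((le_max_right ζ1 _).trans hξle) (not_le.2 h4)
            · have hge : a β ζ0 ≤ a β ξ'' := by
                rcases eq_or_lt_of_le hge' with h' | h'
                · rw [h']
                · exact ((ha β hβE).1 ζ0 ξ'' h' hξ'').le
              have : a δ ξ < a β ξ'' :=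
                lt_of_lt_of_le (lt_trans ((ha δ hδE).2.1 ξ hξ) (lt_of_lt_of_le hδζ0 hge)) le_rfl
              exact absurd heq (ne_of_lt this)
        · rintro δ ⟨hδE, hδlt⟩ δ' ⟨hδ'E, hδ'lt⟩ hne ξ hξ ξ' hξ'
          dsimp only at hξ hξ'
          by_cases hd : δ = β
          · subst hd
            have hd' : δ' ≠ δ := hne.symm
            rw [if_neg hd'] at hξ'
            exact fun heq => hξ'.2 ξ (by rwa [if_pos rfl] at hξ) heq.symm
          · rw [if_neg hd] at hξ
            by_cases hd' : δ' = β
            · subst hd'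
              exact hξ.2 ξ' (by rwa [if_pos rfl] at hξ')
            · rw [if_neg hd'] at hξ'
              have hδβ : δ < β := lt_of_le_of_ne (Order.lt_succ_iff.1 hδlt) hd
              have hδ'β : δ' < β := lt_of_le_of_ne (Order.lt_succ_iff.1 hδ'lt) hd'
              exact hD2 δ ⟨hδE, hδβ⟩ δ' ⟨hδ'E, hδ'β⟩ hne ξ hξ.1 ξ' hξ'.1
      · refine cobdd_mono ?_ (IH β hβγ hβlo)
        rintro δ ⟨hδE, hδlt⟩
        exact ⟨hδE, lt_of_le_of_ne (Order.lt_succ_iff.1 hδlt) (fun (h : δ = β) => hβE (h ▸ hδE))⟩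
    · -- limit case
      obtain ⟨C, hC, hCE⟩ : ∃ C, IsClubIn C γ ∧ ¬((E ∩ Set.Iio γ) ∩ C).Nonempty := by
        by_contra hall
        push_neg at hall
        exact hnonrefl γ hγ ⟨hlim, hall⟩
      have hCnotE : ∀ x ∈ C, x ∉ E ∩ Set.Iio γ := fun x hx hxE => hCE ⟨x, hxE, hx⟩
      set c : Ordinal → Ordinal := fun δ => sSup (C ∩ Set.Iio δ) with hcdef
      have hbdd : ∀ δ : Ordinal, BddAbove (C ∩ Set.Iio δ) := fun δ => ⟨δ, fun x hx => hx.2.le⟩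
      have hcle : ∀ δ, c δ ≤ δ := by
        intro δ
        rcases (C ∩ Set.Iio δ).eq_empty_or_nonempty with he | hne
        · show sSup (C ∩ Set.Iio δ) ≤ δ
          rw [he, csSup_empty]; exact zero_le (a := δ)
        · exact csSup_le hne fun x hx => hx.2.le
      have hclt : ∀ δ ∈ E ∩ Set.Iio γ, c δ < δ := by
        intro δ hδ
        rcases lt_or_eq_of_le (hcle δ) with h | h
        · exact h
        · exfalso
          have hδ0 : δ ≠ 0 := by
            intro h0
            have h1 := (hE hδ.1).2
            rw [h0, Ordinal.cof_zero] at h1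
            exact hκ.pos.ne' h1.symm
          have hne : (C ∩ Set.Iio δ).Nonempty := by
            by_contra hemp
            rw [Set.not_nonempty_iff_eq_empty] at hemp
            apply hδ0
            rw [← h]
            show sSup (C ∩ Set.Iio δ) = 0
            rw [hemp, csSup_empty]; rfl
          have hmem : δ ∈ C := by
            refine hC.2.2 δ hδ.2 hδ0 ?_
            intro d hd
            have hd' : d < sSup (C ∩ Set.Iio δ) := by rw [show sSup (C ∩ Set.Iio δ) = c δ from rfl, h]; exact hd
            obtain ⟨x, hx, hdx⟩ := exists_lt_of_lt_csSup hne hd'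
            exact ⟨x, hx.1, hdx, hx.2⟩
          exact hCnotE δ hmem hδ
      have hkey : ∀ δ δ' : Ordinal, c δ < c δ' → δ ≤ c δ' := by
        intro δ δ' h
        by_contra hlt'
        push_neg at hlt'
        have hsub : C ∩ Set.Iio δ' ⊆ C ∩ Set.Iio δ := by
          intro x hx
          exact ⟨hx.1, lt_of_le_of_lt (le_csSup (hbdd δ') hx) hlt'⟩
        have hle : c δ' ≤ c δ := by
          rcases (C ∩ Set.Iio δ').eq_empty_or_nonempty with he | hne
          · show sSup (C ∩ Set.Iio δ') ≤ c δ
            rw [he, csSup_empty]; exact zero_le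
          · exact csSup_le_csSup (hbdd δ) hne hsub
        exact absurd h (not_lt.2 hle)
      have hnxt : ∀ x : Ordinal, ∃ y, x < γ → (y ∈ C ∧ x < y) := by
        intro x
        by_cases hx : x < γ
        · obtain ⟨y, hy, hxy⟩ := hC.2.1 x hx
          exact ⟨y, fun _ => ⟨hy, hxy⟩⟩
        · exact ⟨0, fun h => absurd h hx⟩
      choose nxt hnxtspec using hnxt
      have hIH : ∀ x : Ordinal, ∃ D : Ordinal → Set Ordinal, x < γ →
          ((∀ δ ∈ E ∩ Set.Iio (nxt x), D δ ⊆ Set.Iio κ.ord ∧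
              ∃ ζ < κ.ord, ∀ ξ, ζ ≤ ξ → ξ < κ.ord → ξ ∈ D δ) ∧
           (∀ δ ∈ E ∩ Set.Iio (nxt x), ∀ δ' ∈ E ∩ Set.Iio (nxt x), δ ≠ δ' →
              ∀ ξ ∈ D δ, ∀ ξ' ∈ D δ', a δ ξ ≠ a δ' ξ')) := by
        intro x
        by_cases hx : x < γ
        · have h1 : nxt x < γ := hC.1 (hnxtspec x hx).1
          obtain ⟨D, hD1, hD2⟩ := IH (nxt x) h1 (h1.trans hγ)
          exact ⟨D, fun _ => ⟨hD1, hD2⟩⟩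
        · exact ⟨fun _ => ∅, fun h => absurd h hx⟩
      choose G hG using hIH
      have hmem : ∀ δ ∈ E ∩ Set.Iio γ, c δ < γ ∧ δ ∈ E ∩ Set.Iio (nxt (c δ)) := by
        intro δ hδ
        have hcγ : c δ < γ := (hclt δ hδ).trans hδ.2
        refine ⟨hcγ, hδ.1, ?_⟩
        have h1 : c δ < nxt (c δ) := (hnxtspec _ hcγ).2
        have h2 : nxt (c δ) ∈ C := (hnxtspec _ hcγ).1
        rcases lt_trichotomy δ (nxt (c δ)) with h | h | h
        · exact h
        · exact absurd hδ (by rw [h]; exact hCnotE _ h2)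
        · have h3 : nxt (c δ) ≤ c δ := le_csSup (hbdd δ) ⟨h2, h⟩
          exact absurd h1 (not_lt.2 h3)
      refine ⟨fun δ => G (c δ) δ ∩ {ξ | c δ < a δ ξ}, ?_, ?_⟩
      · intro δ hδ
        obtain ⟨hcγ, hδmem⟩ := hmem δ hδ
        obtain ⟨hsub, ζ1, hζ1, htail⟩ := (hG (c δ) hcγ).1 δ hδmem
        obtain ⟨ξ0, hξ0, hcξ0⟩ := (ha δ hδ.1).2.2 (c δ) (hclt δ hδ)
        refine ⟨fun x hx => hsub hx.1, max ζ1 ξ0, max_lt hζ1 hξ0, ?_⟩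
        intro ξ hle hξ
        refine ⟨htail ξ ((le_max_left _ _).trans hle) hξ, ?_⟩
        rcases eq_or_lt_of_le ((le_max_right ζ1 ξ0).trans hle) with h | h
        · show c δ < a δ ξ
          rw [← h]; exact hcξ0
        · exact hcξ0.trans ((ha δ hδ.1).1 ξ0 ξ h hξ)
      · rintro δ hδ δ' hδ' hne ξ hξ ξ' hξ'
        obtain ⟨hcγ, hδmem⟩ := hmem δ hδ
        obtain ⟨hcγ', hδ'mem⟩ := hmem δ' hδ'
        have hξκ : ξ < κ.ord := ((hG (c δ) hcγ).1 δ hδmem).1 hξ.1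
        have hξ'κ : ξ' < κ.ord := ((hG (c δ') hcγ').1 δ' hδ'mem).1 hξ'.1
        rcases lt_trichotomy (c δ) (c δ') with h | h | h
        · have h1 : a δ ξ < δ := (ha δ hδ.1).2.1 ξ hξκ
          have h2 : δ ≤ c δ' := hkey δ δ' h
          exact ne_of_lt (lt_of_lt_of_le h1 (le_trans h2 hξ'.2.le))
        · refine (hG (c δ) hcγ).2 δ hδmem δ' (by rw [h]; exact hδ'mem) hne ξ hξ.1 ξ' ?_
          rw [h]; exact hξ'.1
        · have h1 : a δ' ξ' < δ' := (ha δ' hδ'.1).2.1 ξ' hξ'κ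
          have h2 : δ' ≤ c δ := hkey δ' δ h
          exact ne_of_gt (lt_of_lt_of_le h1 (le_trans h2 hξ.2.le))
  -- conclusion
  refine ⟨a, fun δ hδ => ha δ hδ, hfree, ?_⟩
  rintro ⟨D, hD1, hD2⟩
  have hzex : ∀ δ : Ordinal, ∃ z, δ ∈ E → (z < κ.ord ∧ z ∈ D δ) := by
    intro δ
    by_cases hδ : δ ∈ E
    · obtain ⟨ζ, hζ, htail⟩ := (hD1 δ hδ).2
      exact ⟨ζ, fun _ => ⟨hζ, htail ζ le_rfl hζ⟩⟩
    · exact ⟨0, fun h => absurd h hδ⟩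
  choose z hz using hzex
  have hinj : ∀ δ ∈ E, ∀ δ' ∈ E, a δ (z δ) = a δ' (z δ') → δ = δ' := by
    intro δ hδ δ' hδ' heq
    by_contra hne
    exact hD2 δ hδ δ' hδ' hne (z δ) (hz δ hδ).2 (z δ') (hz δ' hδ').2 heq
  have hgex : ∀ β : Ordinal, ∃ d : Ordinal, d < lam.ord ∧
      ∀ δ ∈ E, a δ (z δ) = β → d = δ := by
    intro β
    by_cases hh : ∃ δ, δ ∈ E ∧ a δ (z δ) = β
    · obtain ⟨δ, hδ, heq⟩ := hh
      exact ⟨δ, (hE hδ).1, fun δ' hδ' heq' => hinj _ hδ _ hδ' (by rw [heq, heq'])⟩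
    · exact ⟨0, hlo.pos, fun δ hδ heq => absurd ⟨δ, hδ, heq⟩ hh⟩
  choose g hg1 hg2 using hgex
  -- club of closure points of `g`
  have hclub : IsClubIn {α | α < lam.ord ∧ α ≠ 0 ∧ ∀ β < α, g β < α} lam.ord := by
    refine ⟨fun x hx => hx.1, ?_, ?_⟩
    · intro b hb
      set r : ℕ → Ordinal := fun n => Nat.rec (b + 1)
        (fun _ p => max (p + 1) (Ordinal.bsup p (fun β _ => g β) + 1)) n with hrdef
      have hrsucc : ∀ n, r (n + 1) = max (r n + 1) (Ordinal.bsup (r n) (fun β _ => g β) + 1) :=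
        fun n => rfl
      have hrlt : ∀ n, r n < lam.ord := by
        intro n
        induction n with
        | zero => exact hsucclo hb
        | succ n ih =>
          rw [hrsucc]
          exact max_lt (hsucclo ih)
            (hsucclo (Cardinal.bsup_lt_ord_of_isRegular hlam (Cardinal.lt_ord.1 ih)
              fun i _ => hg1 i))
      refine ⟨⨆ n, r n, ⟨?_, ?_, ?_⟩, ?_⟩
      · exact Cardinal.iSup_lt_ord_lift_of_isRegular hlam
          (by simpa using hκ.aleph0_le.trans_lt hlt) hrlt
      · have h0 : r 0 ≤ ⨆ n, r n := le_ciSup (Ordinal.bddAbove_range r) 0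
        have : (0 : Ordinal) < r 0 := lt_of_le_of_lt (zero_le (a := b)) (hlt1 b)
        exact (lt_of_lt_of_le this h0).ne'
      · intro β hβ
        obtain ⟨n, hn⟩ := exists_lt_of_lt_ciSup hβ
        have h1 : g β ≤ Ordinal.bsup (r n) (fun β _ => g β) := Ordinal.le_bsup _ β hn
        have h2 : Ordinal.bsup (r n) (fun β _ => g β) + 1 ≤ r (n + 1) := by
          rw [hrsucc]; exact le_max_right _ _
        have h3 : r (n + 1) ≤ ⨆ n, r n := le_ciSup (Ordinal.bddAbove_range r) (n + 1)
        exact lt_of_lt_of_le (lt_of_le_of_lt h1 (lt_of_lt_of_le (hlt1 _) h2)) h3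
      · exact lt_of_lt_of_le (hlt1 b) (le_ciSup (Ordinal.bddAbove_range r) 0)
    · intro b hb hb0 happ
      refine ⟨hb, hb0, ?_⟩
      intro β hβ
      obtain ⟨x, hx, hβx, hxb⟩ := happ β hβ
      exact lt_trans (hx.2.2 β hβx) hxb
  obtain ⟨α, hαE, hαC⟩ := hstat.2 _ hclub
  have h1 : a α (z α) < α := (ha α hαE).2.1 (z α) (hz α hαE).1
  have h2 : g (a α (z α)) < α := hαC.2.2 _ h1
  rw [hg2 (a α (z α)) α hαE rfl] at h2
  exact lt_irrefl α h2
end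

section
/- Assume j : V → M is an elementary embedding with critical point χ such that κ < χ < μ, j(χ) ≥ λ = μ⁺, and M is closed under λ-sequences, where μ is singular of cofinality κ. Let ⟨f_α : α < λ⟩ be a scale for μ. Then the set of ordinals α < λ that are not good points of the scale and have cofinality > κ is stationary in λ. -/
open Cardinal Set

/-- `P_χ(λ)`: the subsets of `λ` of cardinality `< χ`. -/
def Pchi (χ : Cardinal.{0}) (lamo : Ordinal.{0}) : Set (Set Ordinal.{0}) :=
  {s | #s < Cardinal.lift.{1} χ ∧ s ⊆ Set.Iio lamo}

/-- The standard combinatorial rendering of "there is an elementary embedding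
`j : V → M` with critical point `χ`, `j(χ) ≥ λ` and `M` closed under `λ`-sequences":
a `χ`-complete normal fine ultrafilter on `P_χ(λ)`. -/
def IsSupercompactWitness (χ : Cardinal.{0}) (lamo : Ordinal.{0})
    (U : Set (Set (Set Ordinal.{0}))) : Prop :=
  (∀ A ∈ U, A ⊆ Pchi χ lamo) ∧
  Pchi χ lamo ∈ U ∧
  (∅ : Set (Set Ordinal)) ∉ U ∧
  (∀ A ∈ U, ∀ B : Set (Set Ordinal), A ⊆ B → B ⊆ Pchi χ lamo → B ∈ U) ∧
  -- χ-complete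
  (∀ F : Set (Set (Set Ordinal)), F.Nonempty → #F < Cardinal.lift.{1} χ →
    F ⊆ U → ⋂₀ F ∈ U) ∧
  -- ultra
  (∀ A : Set (Set Ordinal), A ⊆ Pchi χ lamo → (A ∈ U ∨ Pchi χ lamo \ A ∈ U)) ∧
  -- fine
  (∀ a < lamo, {s ∈ Pchi χ lamo | a ∈ s} ∈ U) ∧
  -- normal
  (∀ A : Ordinal → Set (Set Ordinal), (∀ a < lamo, A a ∈ U) →
    {s ∈ Pchi χ lamo | ∀ a ∈ s, s ∈ A a} ∈ U)


section ScaleHelpers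

open Classical

/-- If `c` is regular and `s ⊆ Iio c.ord` has size `< c`, then `sSup s < c.ord`. -/
lemma sup_small {c : Cardinal.{0}} (hc : c.IsRegular) {s : Set Ordinal.{0}}
    (hs : s ⊆ Iio c.ord) (hcard : #s < Cardinal.lift.{1} c) : sSup s < c.ord := by
  rcases s.eq_empty_or_nonempty with rfl | hne
  · simpa using (Cardinal.isSuccLimit_ord hc.1).pos
  have hbdd : BddAbove s := ⟨c.ord, fun x hx => (hs hx).le⟩
  rcases lt_or_eq_of_le (csSup_le hne (fun b hb => (hs hb).le)) with h | h
  · exact h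
  exfalso
  set e := (Ordinal.ToType.mk (o := c.ord)) with he
  set t : Set c.ord.ToType := {x | ((e.symm x : Iio c.ord) : Ordinal) ∈ s} with ht
  have hunb : Unbounded (· < ·) t := by
    intro x
    have hx : ((e.symm x : Iio c.ord) : Ordinal) < sSup s := by rw [h]; exact (e.symm x).2
    obtain ⟨d, hd, hlt⟩ := exists_lt_of_lt_csSup hne hx
    refine ⟨e ⟨d, hs hd⟩, by simpa [ht] using hd, ?_⟩
    intro hcon
    have : (⟨d, hs hd⟩ : Iio c.ord) < e.symm x := by
      simpa using (e.symm.lt_iff_lt.2 hcon)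
    exact absurd hlt (not_lt.2 (le_of_lt (by exact_mod_cast this)))
  have h1 : c.ord.cof ≤ #t := by
    have := Order.cof_le (s := t) (fun x => by
      obtain ⟨y, hy, hy'⟩ := hunb x; exact ⟨y, hy, not_lt.1 hy'⟩)
    rwa [Ordinal.cof_toType] at this
  rw [hc.cof_eq] at h1
  have hequiv : Nonempty (t ≃ s) := by
    refine ⟨⟨fun x => ⟨(e.symm x.1 : Iio c.ord), x.2⟩,
      fun a => ⟨e ⟨a.1, hs a.2⟩, by simpa [ht] using a.2⟩, ?_, ?_⟩⟩
    · intro x; ext; simp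
    · intro a; ext; simp
  have h2 : Cardinal.lift.{1} #t = Cardinal.lift.{0} #s := Cardinal.lift_mk_eq'.2 hequiv
  have h3 : Cardinal.lift.{1} c ≤ #s := by
    calc Cardinal.lift.{1} c ≤ Cardinal.lift.{1} #t := Cardinal.lift_le.2 h1
    _ = Cardinal.lift.{0} #s := h2
    _ = #s := Cardinal.lift_uzero #s
  exact absurd hcard (not_lt.2 h3)

variable {χ : Cardinal.{0}} {lamo : Ordinal.{0}} {U : Set (Set (Set Ordinal.{0}))}

lemma scw_nonempty (hU : IsSupercompactWitness χ lamo U) {A} (hA : A ∈ U) : A.Nonempty := by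
  rcases A.eq_empty_or_nonempty with rfl | h
  · exact absurd hA hU.2.2.1
  · exact h

lemma scw_inter (hU : IsSupercompactWitness χ lamo U) (hχ : ℵ₀ ≤ χ) {A B : Set (Set Ordinal)}
    (hA : A ∈ U) (hB : B ∈ U) : A ∩ B ∈ U := by
  have h2 : #({A, B} : Set (Set (Set Ordinal))) < Cardinal.lift.{1} χ :=
    lt_of_lt_of_le (Set.toFinite _).lt_aleph0 (Cardinal.aleph0_le_lift.2 hχ)
  have := hU.2.2.2.2.1 {A, B} ⟨A, by simp⟩ h2 (by
    intro x hx; rcases hx with rfl | hx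
    · exact hA
    · simp only [mem_singleton_iff] at hx; subst hx; exact hB)
  rwa [Set.sInter_pair] at this

lemma scw_interOrd (hU : IsSupercompactWitness χ lamo U) {ι : Set Ordinal}
    (hι : #ι < Cardinal.lift.{1} χ) {A : Ordinal → Set (Set Ordinal)}
    (hA : ∀ i ∈ ι, A i ∈ U) : {s ∈ Pchi χ lamo | ∀ i ∈ ι, s ∈ A i} ∈ U := by
  rcases ι.eq_empty_or_nonempty with rfl | ⟨i₀, hi₀⟩
  · have : {s ∈ Pchi χ lamo | ∀ i ∈ (∅ : Set Ordinal), s ∈ A i} = Pchi χ lamo := by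
      ext s; simp
    rw [this]; exact hU.2.1
  · have hF : ⋂₀ (A '' ι) ∈ U := by
      refine hU.2.2.2.2.1 _ ⟨A i₀, Set.mem_image_of_mem A hi₀⟩
        (lt_of_le_of_lt Cardinal.mk_image_le hι) ?_
      rintro _ ⟨i, hi, rfl⟩; exact hA i hi
    refine hU.2.2.2.1 _ hF _ ?_ (fun s hs => hs.1)
    intro s hs
    have hsub : ∀ i ∈ ι, s ∈ A i := by
      intro i hi; exact hs (A i) (Set.mem_image_of_mem A hi)
    exact ⟨hU.1 _ hF hs, hsub⟩

lemma scw_compl (hU : IsSupercompactWitness χ lamo U) {A : Set (Set Ordinal)}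
    (hA : A ⊆ Pchi χ lamo) (h : A ∉ U) : {s ∈ Pchi χ lamo | s ∉ A} ∈ U := by
  rcases hU.2.2.2.2.2.1 A hA with h' | h'
  · exact absurd h' h
  · have : Pchi χ lamo \ A = {s ∈ Pchi χ lamo | s ∉ A} := by ext s; simp [Set.mem_diff]
    rwa [this] at h'

lemma scw_press (hU : IsSupercompactWitness χ lamo U) (hχ : ℵ₀ ≤ χ)
    {h : Set Ordinal → Ordinal} {W : Set (Set Ordinal)} (hW : W ∈ U)
    (hs : ∀ s ∈ W, h s ∈ s) : ∃ a < lamo, {s ∈ Pchi χ lamo | h s = a} ∈ U := by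
  by_contra hcon
  push_neg at hcon
  have hAa : ∀ a < lamo, {s ∈ Pchi χ lamo | h s ≠ a} ∈ U := by
    intro a ha
    have := scw_compl hU (A := {s ∈ Pchi χ lamo | h s = a}) (fun s hs => hs.1) (hcon a ha)
    have he : {s ∈ Pchi χ lamo | s ∉ {s ∈ Pchi χ lamo | h s = a}} =
        {s ∈ Pchi χ lamo | h s ≠ a} := by
      ext s; constructor
      · rintro ⟨h1, h2⟩; exact ⟨h1, fun he => h2 ⟨h1, he⟩⟩
      · rintro ⟨h1, h2⟩; exact ⟨h1, fun hc => h2 hc.2⟩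
    rwa [he] at this
  have hD := hU.2.2.2.2.2.2.2 (fun a => {s ∈ Pchi χ lamo | h s ≠ a}) hAa
  obtain ⟨s, hsD, hsW⟩ := scw_nonempty hU (scw_inter hU hχ hD hW)
  exact (hsD.2 (h s) (hs s hsW)).2 rfl

lemma scw_pressLt (hU : IsSupercompactWitness χ lamo U) (hχ : ℵ₀ ≤ χ) {θ : Ordinal.{0}}
    (hθ : Cardinal.lift.{1} θ.card < Cardinal.lift.{1} χ)
    {h : Set Ordinal → Ordinal} {W : Set (Set Ordinal)} (hW : W ∈ U)
    (hs : ∀ s ∈ W, h s < θ) : ∃ z < θ, {s ∈ Pchi χ lamo | h s = z} ∈ U := by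
  by_contra hcon
  push_neg at hcon
  have hAa : ∀ z ∈ Set.Iio θ, {s ∈ Pchi χ lamo | h s ≠ z} ∈ U := by
    intro z hz
    have := scw_compl hU (A := {s ∈ Pchi χ lamo | h s = z}) (fun s hs => hs.1) (hcon z hz)
    have he : {s ∈ Pchi χ lamo | s ∉ {s ∈ Pchi χ lamo | h s = z}} =
        {s ∈ Pchi χ lamo | h s ≠ z} := by
      ext s; constructor
      · rintro ⟨h1, h2⟩; exact ⟨h1, fun he => h2 ⟨h1, he⟩⟩
      · rintro ⟨h1, h2⟩; exact ⟨h1, fun hc => h2 hc.2⟩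
    rwa [he] at this
  have hι : #(Set.Iio θ) < Cardinal.lift.{1} χ := by
    rw [Ordinal.mk_Iio_ordinal]; exact hθ
  have hD := scw_interOrd hU hι hAa
  obtain ⟨s, hsD, hsW⟩ := scw_nonempty hU (scw_inter hU hχ hD hW)
  exact (hsD.2 (h s) (hs s hsW)).2 rfl

lemma scw_lt_sup (hU : IsSupercompactWitness χ lamo U) (hlim : Order.IsSuccLimit lamo)
    {a : Ordinal} (ha : a < lamo) : {s ∈ Pchi χ lamo | a < sSup s} ∈ U := by
  have ha1 : a + 1 < lamo := by
    have := hlim.succ_lt ha; rwa [← Ordinal.add_one_eq_succ] at this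
  refine hU.2.2.2.1 _ (hU.2.2.2.2.2.2.1 (a + 1) ha1) _ ?_ (fun s hs => hs.1)
  rintro s ⟨hsP, hmem⟩
  have hbdd : BddAbove s := ⟨lamo, fun x hx => (hsP.2 hx).le⟩
  exact ⟨hsP, lt_of_lt_of_le (lt_add_one a) (le_csSup hbdd hmem)⟩

lemma scw_bound (hU : IsSupercompactWitness χ lamo U) (hχ : ℵ₀ ≤ χ)
    {h : Set Ordinal → Ordinal} {W : Set (Set Ordinal)} (hW : W ∈ U)
    (hb : ∀ s ∈ W, h s < sSup s) : ∃ a < lamo, {s ∈ Pchi χ lamo | h s < a} ∈ U := by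
  classical
  set g : Set Ordinal → Ordinal := fun s => sInf {x | x ∈ s ∧ h s < x} with hg
  have hgs : ∀ s ∈ W, g s ∈ s ∧ h s < g s := by
    intro s hsW
    have hne : s.Nonempty := by
      rcases s.eq_empty_or_nonempty with he | h'
      · have h2 := hb s hsW
        rw [he, csSup_empty] at h2
        exact absurd h2 (not_lt_of_ge (zero_le))
      · exact h'
    obtain ⟨x, hx, hhx⟩ := exists_lt_of_lt_csSup hne (hb s hsW)
    have := csInf_mem (⟨x, hx, hhx⟩ : {x | x ∈ s ∧ h s < x}.Nonempty)
    exact ⟨this.1, this.2⟩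
  obtain ⟨a, ha, hEq⟩ := scw_press hU hχ hW (fun s hsW => (hgs s hsW).1)
  refine ⟨a, ha, ?_⟩
  refine hU.2.2.2.1 _ (scw_inter hU hχ hEq hW) _ ?_ (fun s hs => hs.1)
  rintro s ⟨⟨hsP, hge⟩, hsW⟩
  exact ⟨hsP, hge ▸ (hgs s hsW).2⟩

end ScaleHelpers

/-- If `κ < χ < μ`, `χ` carries a supercompactness measure on `P_χ(μ⁺)` (equivalently,
there is an elementary embedding `j : V → M` with critical point `χ`, `j(χ) ≥ μ⁺ = λ`
and `M` closed under `λ`-sequences), `μ` is singular of cofinality `κ` and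
`⟨f_α : α < μ⁺⟩` is a scale for `μ`, then the set of non-good points of the scale of
cofinality `> κ` is stationary in `μ⁺`. -/
theorem stmt14 (μ κ χ : Cardinal.{0}) (μs : Ordinal → Cardinal)
    (f : Ordinal → Ordinal → Ordinal)
    (hinf : ℵ₀ ≤ μ) (hκ : μ.ord.cof = κ) (hsing : κ < μ)
    (hκχ : κ < χ) (hχμ : χ < μ)
    (U : Set (Set (Set Ordinal)))
    (hU : IsSupercompactWitness χ (Order.succ μ).ord U)
    (hreg : ∀ ξ < κ.ord, (μs ξ).IsRegular)
    (hμs : ∀ ξ η : Ordinal, ξ < η → η < κ.ord → μs ξ < μs η)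
    (hlt : ∀ ξ < κ.ord, μs ξ < μ)
    (hcofμ : ∀ c < μ, ∃ ξ < κ.ord, c < μs ξ)
    (hf : ∀ α < (Order.succ μ).ord, ∀ ξ < κ.ord, f α ξ < (μs ξ).ord)
    (hincf : ∀ α β : Ordinal, α < β → β < (Order.succ μ).ord →
      ∃ ζ < κ.ord, ∀ ξ, ζ ≤ ξ → ξ < κ.ord → f α ξ < f β ξ)
    (hcofinal : ∀ g : Ordinal → Ordinal, (∀ ξ < κ.ord, g ξ < (μs ξ).ord) →
      ∃ α < (Order.succ μ).ord, ∃ ζ < κ.ord, ∀ ξ, ζ ≤ ξ → ξ < κ.ord → g ξ < f α ξ) :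
    IsStationaryIn
      {α : Ordinal | α < (Order.succ μ).ord ∧ κ < α.cof ∧ ¬ GoodPt f κ.ord α}
      (Order.succ μ).ord := by
  classical
  have hkinf : ℵ₀ ≤ κ := by
    have h1 := Ordinal.aleph0_le_cof.2 (Cardinal.isSuccLimit_ord hinf)
    rwa [hκ] at h1
  have hchiinf : ℵ₀ ≤ χ := hkinf.trans hκχ.le
  have hsreg : (Order.succ μ).IsRegular := Cardinal.isRegular_succ hinf
  have hllim : Order.IsSuccLimit (Order.succ μ).ord :=
    Cardinal.isSuccLimit_ord (hinf.trans (Order.le_succ μ))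
  have hκord : Order.IsSuccLimit κ.ord := Cardinal.isSuccLimit_ord hkinf
  have hχs : χ < Order.succ μ := hχμ.trans (Order.lt_succ μ)
  have hliftχs : Cardinal.lift.{1} χ < Cardinal.lift.{1} (Order.succ μ) := Cardinal.lift_lt.2 hχs
  have hκχl : Cardinal.lift.{1} κ.ord.card < Cardinal.lift.{1} χ := by
    rw [Cardinal.card_ord]; exact Cardinal.lift_lt.2 hκχ
  set lamo := (Order.succ μ).ord with hlamodef
  set X := Pchi χ lamo with hXdef
  have hfine : ∀ a < lamo, {s ∈ X | a ∈ s} ∈ U := hU.2.2.2.2.2.2.1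
  have hnorm : ∀ A : Ordinal → Set (Set Ordinal), (∀ a < lamo, A a ∈ U) →
      {s ∈ X | ∀ a ∈ s, s ∈ A a} ∈ U := hU.2.2.2.2.2.2.2
  have hsupX : ∀ s ∈ X, sSup s < lamo := fun s hs => sup_small hsreg hs.2 (hs.1.trans hliftχs)
  have hbddX : ∀ s ∈ X, BddAbove s := fun s hs => ⟨lamo, fun x hx => (hs.2 hx).le⟩
  have hE1 : {s ∈ X | ∀ a ∈ s, s ∈ {t ∈ X | a + 1 ∈ t}} ∈ U := by
    refine hnorm _ (fun a ha => hfine (a + 1) ?_)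
    have := hllim.succ_lt ha; rwa [← Ordinal.add_one_eq_succ] at this
  have hE0 : {s ∈ X | (0 : Ordinal) ∈ s} ∈ U := hfine 0 hllim.pos
  have hstr : ∀ s, s ∈ X → (∀ a ∈ s, a + 1 ∈ s) → (0 : Ordinal) ∈ s →
      (0 < sSup s ∧ sSup s ∉ s ∧ (∀ b, b < sSup s → ∃ a ∈ s, b < a)) := by
    intro s hsX hsucc h0
    have hbdd := hbddX s hsX
    have hne : s.Nonempty := ⟨0, h0⟩
    have h1 : (0 : Ordinal) + 1 ∈ s := hsucc 0 h0
    refine ⟨lt_of_lt_of_le (lt_add_one 0) (le_csSup hbdd h1), ?_, ?_⟩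
    · intro hmem
      exact absurd (le_csSup hbdd (hsucc _ hmem)) (not_le.2 (lt_add_one _))
    · exact fun b hb => exists_lt_of_lt_csSup hne hb
  -- almost every s has cofinality of sSup s above κ
  have hG : {s ∈ X | κ < (sSup s).cof} ∈ U := by
    by_contra hGn
    have hGc : {s ∈ X | s ∉ {s ∈ X | κ < (sSup s).cof}} ∈ U :=
      scw_compl hU (fun s hs => hs.1) hGn
    set W := ({s ∈ X | s ∉ {s ∈ X | κ < (sSup s).cof}} ∩
      {s ∈ X | ∀ a ∈ s, s ∈ {t ∈ X | a + 1 ∈ t}}) ∩ {s ∈ X | (0 : Ordinal) ∈ s} with hWdef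
    have hW : W ∈ U := scw_inter hU hchiinf (scw_inter hU hchiinf hGc hE1) hE0
    have hWprop : ∀ s ∈ W, s ∈ X ∧ (sSup s).cof ≤ κ ∧ 0 < sSup s ∧ sSup s ∉ s ∧
        (∀ b, b < sSup s → ∃ a ∈ s, b < a) := by
      rintro s ⟨⟨⟨hsX, hsc⟩, hsX2, hsucc⟩, hsX3, h0⟩
      have hsucc' : ∀ a ∈ s, a + 1 ∈ s := fun a ha => (hsucc a ha).2
      obtain ⟨p1, p2, p3⟩ := hstr s hsX hsucc' h0
      refine ⟨hsX, ?_, p1, p2, p3⟩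
      by_contra hcon
      exact hsc ⟨hsX, not_le.1 hcon⟩
    have hDs : ∀ s : Set Ordinal, ∃ e : Ordinal → Ordinal,
        s ∈ W → ((∀ i, i < κ.ord → e i ∈ s) ∧
          (∀ b, b < sSup s → ∃ i, i < κ.ord ∧ b < e i)) := by
      intro s
      by_cases hsW : s ∈ W
      case neg => exact ⟨fun _ => 0, fun h => absurd h hsW⟩
      obtain ⟨hsX, hcof, hpos, hnmem, hunb⟩ := hWprop s hsW
      obtain ⟨ι, fl, hlsub, hmk⟩ := Ordinal.exists_lsub_cof (sSup s)
      haveI hι : Nonempty ι := by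
        rw [← Cardinal.mk_ne_zero_iff, hmk]
        exact Ordinal.cof_ne_zero.2 (ne_of_gt hpos)
      have hfl : ∀ i, fl i < sSup s := by intro i; rw [← hlsub]; exact Ordinal.lt_lsub fl i
      choose d hd1 hd2 using fun i => hunb (fl i) (hfl i)
      have hle : #(range d) ≤ #(Set.Iio κ.ord) := by
        rw [Ordinal.mk_Iio_ordinal, Cardinal.card_ord]
        calc #(range d) = Cardinal.lift.{0} #(range d) := (Cardinal.lift_uzero _).symm
        _ ≤ Cardinal.lift.{1} #ι := Cardinal.mk_range_le_lift
        _ = Cardinal.lift.{1} (sSup s).cof := by rw [hmk]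
        _ ≤ Cardinal.lift.{1} κ := Cardinal.lift_le.2 hcof
      obtain ⟨emb⟩ := (Cardinal.le_def _ _).1 hle
      haveI : Nonempty (range d) := ⟨⟨d (Classical.arbitrary ι), mem_range_self _⟩⟩
      refine ⟨fun i => if h : i < κ.ord then
        ((Function.invFun emb ⟨i, h⟩ : range d) : Ordinal) else 0, fun _ => ⟨?_, ?_⟩⟩
      · intro i hi
        beta_reduce
        rw [dif_pos hi]
        obtain ⟨i0, hi0⟩ := (Function.invFun emb ⟨i, hi⟩).2
        rw [← hi0]; exact hd1 i0
      · intro b hb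
        rw [← hlsub] at hb
        obtain ⟨i0, hi0⟩ := Ordinal.lt_lsub_iff.1 hb
        obtain ⟨j, hj⟩ := Function.invFun_surjective emb.injective ⟨d i0, mem_range_self _⟩
        refine ⟨j.1, j.2, ?_⟩
        beta_reduce
        rw [dif_pos (show (j : Ordinal) < κ.ord from j.2), hj]
        exact lt_of_le_of_lt hi0 (hd2 i0)
    choose e he using hDs
    have hx : ∀ i : Ordinal, ∃ x, x < lamo ∧ (i < κ.ord → {s ∈ X | e s i = x} ∈ U) := by
      intro i
      by_cases hi : i < κ.ord
      · obtain ⟨a, ha, hset⟩ := scw_press hU hchiinf hW (fun s hsW => (he s hsW).1 i hi)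
        exact ⟨a, ha, fun _ => hset⟩
      · exact ⟨0, hllim.pos, fun h => absurd h hi⟩
    choose x hx1 hx2 using hx
    have hτ : sSup (x '' Set.Iio κ.ord) < lamo := by
      refine sup_small hsreg ?_ ?_
      · rintro _ ⟨i, _, rfl⟩; exact hx1 i
      · refine lt_of_le_of_lt Cardinal.mk_image_le ?_
        rw [Ordinal.mk_Iio_ordinal, Cardinal.card_ord]
        exact Cardinal.lift_lt.2 (hκχ.trans hχs)
    have hD : {s ∈ X | ∀ i ∈ Set.Iio κ.ord, s ∈ {s ∈ X | e s i = x i}} ∈ U := by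
      refine scw_interOrd hU ?_ (fun i hi => hx2 i hi)
      rw [Ordinal.mk_Iio_ordinal, Cardinal.card_ord]
      exact Cardinal.lift_lt.2 hκχ
    obtain ⟨s, ⟨hsW, hsD⟩, hsτ⟩ := scw_nonempty hU
      (scw_inter hU hchiinf (scw_inter hU hchiinf hW hD) (scw_lt_sup hU hllim hτ))
    obtain ⟨i, hi, hbi⟩ := (he s hsW).2 _ hsτ.2
    have hxi : e s i = x i := (hsD.2 i hi).2
    have hxiτ : x i ≤ sSup (x '' Set.Iio κ.ord) :=
      le_csSup ⟨lamo, by rintro _ ⟨j, _, rfl⟩; exact (hx1 j).le⟩ (Set.mem_image_of_mem x hi)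
    rw [hxi] at hbi
    exact absurd (lt_of_lt_of_le hbi hxiτ) (lt_irrefl _)
  refine ⟨hllim, ?_⟩
  intro C hC
  by_contra hemp
  have hgood : ∀ α ∈ C, κ < α.cof → GoodPt f κ.ord α := by
    intro α hα hcof
    by_contra hng
    exact hemp ⟨α, ⟨hC.1 hα, hcof, hng⟩, hα⟩
  -- transfer the club C to a U-large set
  have hECa : ∀ a, a < lamo → {t ∈ X | ∃ c ∈ C, a < c ∧ c ∈ t} ∈ U := by
    intro a ha
    obtain ⟨c, hcC, hac⟩ := hC.2.1 a ha
    refine hU.2.2.2.1 _ (hfine c (hC.1 hcC)) _ ?_ (fun s hs => hs.1)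
    rintro s ⟨hsX, hcs⟩
    exact ⟨hsX, c, hcC, hac, hcs⟩
  have hEC : {s ∈ X | ∀ a ∈ s, s ∈ {t ∈ X | ∃ c ∈ C, a < c ∧ c ∈ t}} ∈ U := hnorm _ hECa
  set E3 := (({s ∈ X | κ < (sSup s).cof} ∩
      {s ∈ X | ∀ a ∈ s, s ∈ {t ∈ X | ∃ c ∈ C, a < c ∧ c ∈ t}}) ∩
      {s ∈ X | ∀ a ∈ s, s ∈ {t ∈ X | a + 1 ∈ t}}) ∩ {s ∈ X | (0 : Ordinal) ∈ s} with hE3def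
  have hE3 : E3 ∈ U :=
    scw_inter hU hchiinf (scw_inter hU hchiinf (scw_inter hU hchiinf hG hEC) hE1) hE0
  have hE3X : ∀ s ∈ E3, s ∈ X := by rintro s ⟨⟨⟨⟨h, _⟩, _⟩, _⟩, _⟩; exact h
  have hE3prop : ∀ s ∈ E3, κ < (sSup s).cof ∧ sSup s ∈ C ∧ 0 < sSup s ∧ sSup s ∉ s ∧
      (∀ b, b < sSup s → ∃ a ∈ s, b < a) := by
    rintro s ⟨⟨⟨⟨hsX, hscof⟩, _, hsC⟩, _, hsucc⟩, _, h0⟩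
    have hsucc' : ∀ a ∈ s, a + 1 ∈ s := fun a ha => (hsucc a ha).2
    obtain ⟨p1, p2, p3⟩ := hstr s hsX hsucc' h0
    refine ⟨hscof, ?_, p1, p2, p3⟩
    refine hC.2.2 (sSup s) (hsupX s hsX) (ne_of_gt p1) ?_
    intro d hd
    obtain ⟨a, has, hda⟩ := p3 d hd
    obtain ⟨hsX', c, hcC, hac, hcs⟩ := hsC a has
    have hcσ : c < sSup s := by
      rcases lt_or_eq_of_le (le_csSup (hbddX s hsX) hcs) with h' | h'
      · exact h'
      · exact absurd (h' ▸ hcs) p2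
    exact ⟨c, hcC, lt_trans hda hac, hcσ⟩
  -- choose goodness witnesses on E3
  have hAex : ∀ s : Set Ordinal, ∃ (A : Set Ordinal) (ζ : Ordinal), ζ < κ.ord ∧
      (s ∈ E3 → (A ⊆ Set.Iio (sSup s) ∧ (∀ b < sSup s, ∃ c ∈ A, b < c) ∧
        (∀ β ∈ A, ∀ γ ∈ A, β < γ → ∀ ξ, ζ ≤ ξ → ξ < κ.ord → f β ξ < f γ ξ))) := by
    intro s
    by_cases hs : s ∈ E3
    · obtain ⟨hscof, hsC, _, _, _⟩ := hE3prop s hs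
      obtain ⟨A, h1, h2, ζ, hζ, h3⟩ := hgood (sSup s) hsC hscof
      exact ⟨A, ζ, hζ, fun _ => ⟨h1, h2, h3⟩⟩
    · exact ⟨∅, 0, hκord.pos, fun h => absurd h hs⟩
  choose As zs hzlt hAgood using hAex
  obtain ⟨ζ0, hζ0, hEz⟩ := scw_pressLt hU hchiinf hκχl hU.2.1 (fun s _ => hzlt s)
  set E4 := E3 ∩ {s ∈ X | zs s = ζ0} with hE4def
  have hE4 : E4 ∈ U := scw_inter hU hchiinf hE3 hEz
  have hE4X : ∀ s ∈ E4, s ∈ X := fun s hs => hE3X s hs.1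
  have hAsub : ∀ s ∈ E4, As s ⊆ Set.Iio (sSup s) := fun s hs => (hAgood s hs.1).1
  have hAunb : ∀ s ∈ E4, ∀ b < sSup s, ∃ c ∈ As s, b < c := fun s hs => (hAgood s hs.1).2.1
  have hAmono : ∀ s ∈ E4, ∀ β ∈ As s, ∀ γ ∈ As s, β < γ → ∀ ξ, ζ0 ≤ ξ → ξ < κ.ord →
      f β ξ < f γ ξ := by
    intro s hs
    have h1 := (hAgood s hs.1).2.2
    rwa [hs.2.2] at h1
  -- the "least element of As s above α" and its properties
  have hccp : ∀ α, ∀ s ∈ E4, α < sSup s →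
      (sInf {a | a ∈ As s ∧ α < a} ∈ As s ∧ α < sInf {a | a ∈ As s ∧ α < a}) := by
    intro α s hs hα
    obtain ⟨c, hcA, hc⟩ := hAunb s hs α hα
    have h1 := csInf_mem (⟨c, hcA, hc⟩ : {a | a ∈ As s ∧ α < a}.Nonempty)
    exact ⟨h1.1, h1.2⟩
  have hgbdd : ∀ s ∈ E4, ∀ ξ < κ.ord, BddAbove ((fun a => f a ξ) '' As s) := by
    intro s hs ξ hξ
    refine ⟨(μs ξ).ord, ?_⟩
    rintro _ ⟨a, haA, rfl⟩
    exact (hf a (lt_trans (hAsub s hs haA) (hsupX s (hE4X s hs))) ξ hξ).le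
  have hmemg : ∀ s ∈ E4, ∀ ξ < κ.ord, ∀ a ∈ As s, f a ξ ≤ sSup ((fun a => f a ξ) '' As s) :=
    fun s hs ξ hξ a ha => le_csSup (hgbdd s hs ξ hξ) (Set.mem_image_of_mem _ ha)
  -- uniform bounds on the selectors
  have hbndex : ∀ α, ∃ b, b < lamo ∧
      (α < lamo → {s ∈ X | sInf {a | a ∈ As s ∧ α < a} < b} ∈ U) := by
    intro α
    by_cases hα : α < lamo
    · have hW : E4 ∩ {s ∈ X | α < sSup s} ∈ U :=
        scw_inter hU hchiinf hE4 (scw_lt_sup hU hllim hα)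
      have hbd : ∀ s ∈ E4 ∩ {s ∈ X | α < sSup s},
          sInf {a | a ∈ As s ∧ α < a} < sSup s := by
        rintro s ⟨hs4, _, hαs⟩
        exact hAsub s hs4 (hccp α s hs4 hαs).1
      obtain ⟨b, hb, hset⟩ := scw_bound hU hchiinf hW hbd
      exact ⟨b, hb, fun _ => hset⟩
    · exact ⟨0, hllim.pos, fun h => absurd h hα⟩
  choose bnd hbnd1 hbnd2 using hbndex
  have hztex : ∀ α, ∀ s, ∃ z, z < κ.ord ∧
      ((s ∈ E4 ∧ α < sSup s ∧ sInf {a | a ∈ As s ∧ α < a} < bnd α) →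
        ∀ ξ, z ≤ ξ → ξ < κ.ord → f (sInf {a | a ∈ As s ∧ α < a}) ξ < f (bnd α) ξ) := by
    intro α s
    by_cases hcond : s ∈ E4 ∧ α < sSup s ∧ sInf {a | a ∈ As s ∧ α < a} < bnd α
    · obtain ⟨z, hz, ht⟩ := hincf (sInf {a | a ∈ As s ∧ α < a}) (bnd α) hcond.2.2 (hbnd1 α)
      exact ⟨z, hz, fun _ => ht⟩
    · exact ⟨0, hκord.pos, fun h => absurd h hcond⟩
  choose zt hzt1 hzt2 using hztex
  have hzpex : ∀ α, ∃ z, z < κ.ord ∧ {s ∈ X | zt α s = z} ∈ U :=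
    fun α => scw_pressLt hU hchiinf hκχl hU.2.1 (fun s _ => hzt1 α s)
  choose zp hzp1 hzp2 using hzpex
  -- pigeonhole: some tail value occurs unboundedly often
  have hpig : ∃ w, w < κ.ord ∧ ∀ α0, α0 < lamo → ∃ α, α0 ≤ α ∧ α < lamo ∧ zp α = w := by
    by_contra hcon
    push_neg at hcon
    have hcon' : ∀ w, ∃ α0, α0 < lamo ∧
        (w < κ.ord → ∀ α, α0 ≤ α → α < lamo → zp α ≠ w) := by
      intro w
      by_cases hw : w < κ.ord
      · obtain ⟨α0, h1, h2⟩ := hcon w hw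
        exact ⟨α0, h1, fun _ => h2⟩
      · exact ⟨0, hllim.pos, fun h => absurd h hw⟩
    choose b0 hb01 hb02 using hcon'
    have hβ : sSup (b0 '' Set.Iio κ.ord) < lamo := by
      refine sup_small hsreg ?_ (lt_of_le_of_lt Cardinal.mk_image_le ?_)
      · rintro _ ⟨z, _, rfl⟩; exact hb01 z
      · rw [Ordinal.mk_Iio_ordinal, Cardinal.card_ord]
        exact Cardinal.lift_lt.2 (hκχ.trans hχs)
    refine hb02 (zp (sSup (b0 '' Set.Iio κ.ord))) (hzp1 _) (sSup (b0 '' Set.Iio κ.ord))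
      ?_ hβ rfl
    exact le_csSup ⟨lamo, by rintro _ ⟨z, _, rfl⟩; exact (hb01 z).le⟩
      (Set.mem_image_of_mem b0 (hzp1 _))
  obtain ⟨z1, hz1, hpig⟩ := hpig
  -- the key claim: on a tail, the sup along As s is U-a.e. bounded by a constant below (μs ξ).ord
  have hclaim : ∀ ξ, ζ0 ≤ ξ → z1 ≤ ξ → ξ < κ.ord → ∃ γ, γ < (μs ξ).ord ∧
      {s ∈ X | sSup ((fun a => f a ξ) '' As s) ≤ γ} ∈ U := by
    intro ξ hξ0 hξ1 hξκ
    by_contra hcon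
    push_neg at hcon
    have hN : ∀ γ, γ < (μs ξ).ord → {s ∈ X | γ < sSup ((fun a => f a ξ) '' As s)} ∈ U := by
      intro γ hγ
      have h1 := scw_compl hU (A := {s ∈ X | sSup ((fun a => f a ξ) '' As s) ≤ γ})
        (fun s hs => hs.1) (hcon γ hγ)
      refine hU.2.2.2.1 _ h1 _ ?_ (fun s hs => hs.1)
      rintro s ⟨hsX, hns⟩
      exact ⟨hsX, not_le.1 (fun hle => hns ⟨hsX, hle⟩)⟩
    have hddp : ∀ γ, ∀ s, s ∈ E4 → γ < sSup ((fun a => f a ξ) '' As s) →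
        (sInf {a | a ∈ As s ∧ γ < f a ξ} ∈ As s ∧
          γ < f (sInf {a | a ∈ As s ∧ γ < f a ξ}) ξ) := by
      intro γ s hs4 hγg
      have hne : ((fun a => f a ξ) '' As s).Nonempty := by
        rcases ((fun a => f a ξ) '' As s).eq_empty_or_nonempty with he | h'
        · rw [he, csSup_empty] at hγg
          exact absurd hγg (not_lt_of_ge (zero_le))
        · exact h'
      obtain ⟨y, ⟨a, haA, rfl⟩, hy⟩ := exists_lt_of_lt_csSup hne hγg
      have h1 := csInf_mem (⟨a, haA, hy⟩ : {a | a ∈ As s ∧ γ < f a ξ}.Nonempty)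
      exact ⟨h1.1, h1.2⟩
    have hagex : ∀ γ, ∃ b, b < lamo ∧ (γ < (μs ξ).ord →
        {s ∈ X | sInf {a | a ∈ As s ∧ γ < f a ξ} < b} ∈ U) := by
      intro γ
      by_cases hγ : γ < (μs ξ).ord
      · have hW : {s ∈ X | γ < sSup ((fun a => f a ξ) '' As s)} ∩ E4 ∈ U :=
          scw_inter hU hchiinf (hN γ hγ) hE4
        have hbd : ∀ s ∈ {s ∈ X | γ < sSup ((fun a => f a ξ) '' As s)} ∩ E4,
            sInf {a | a ∈ As s ∧ γ < f a ξ} < sSup s := by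
          rintro s ⟨⟨hsX, hγg⟩, hs4⟩
          exact hAsub s hs4 (hddp γ s hs4 hγg).1
        obtain ⟨b, hb, hset⟩ := scw_bound hU hchiinf hW hbd
        exact ⟨b, hb, fun _ => hset⟩
      · exact ⟨0, hllim.pos, fun h => absurd h hγ⟩
    choose ag hag1 hag2 using hagex
    have hαsup : sSup (ag '' Set.Iio (μs ξ).ord) < lamo := by
      refine sup_small hsreg ?_ (lt_of_le_of_lt Cardinal.mk_image_le ?_)
      · rintro _ ⟨γ, _, rfl⟩; exact hag1 γ
      · rw [Ordinal.mk_Iio_ordinal, Cardinal.card_ord]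
        exact Cardinal.lift_lt.2 ((hlt ξ hξκ).trans (Order.lt_succ μ))
    have hα1 : sSup (ag '' Set.Iio (μs ξ).ord) + 1 < lamo := by
      have h2 := hllim.succ_lt hαsup; rwa [← Ordinal.add_one_eq_succ] at h2
    obtain ⟨abar, habar1, habar2, habar3⟩ := hpig (sSup (ag '' Set.Iio (μs ξ).ord) + 1) hα1
    have hfb : f (bnd abar) ξ < (μs ξ).ord := hf (bnd abar) (hbnd1 abar) ξ hξκ
    have hγb : f (bnd abar) ξ + 1 < (μs ξ).ord := by
      have h2 := (Cardinal.isSuccLimit_ord (hreg ξ hξκ).1).succ_lt hfb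
      rwa [← Ordinal.add_one_eq_succ] at h2
    obtain ⟨s, ⟨⟨hsXγ, hsγ⟩, hsXd, hsd⟩, ⟨⟨hs4, hsXα, hsα⟩, hsXc, hsc⟩, hsXz, hsz⟩ :=
      scw_nonempty hU (scw_inter hU hchiinf
        (scw_inter hU hchiinf (hN _ hγb) (hag2 _ hγb))
        (scw_inter hU hchiinf
          (scw_inter hU hchiinf
            (scw_inter hU hchiinf hE4 (scw_lt_sup hU hllim habar2))
            (hbnd2 abar habar2))
          (hzp2 abar)))
    have hccm := hccp abar s hs4 hsα
    have htail : ∀ ξ', zp abar ≤ ξ' → ξ' < κ.ord →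
        f (sInf {a | a ∈ As s ∧ abar < a}) ξ' < f (bnd abar) ξ' := by
      have h2 := hzt2 abar s ⟨hs4, hsα, hsc⟩
      rwa [hsz] at h2
    have hddm := hddp _ s hs4 hsγ
    have hchain : sInf {a | a ∈ As s ∧ f (bnd abar) ξ + 1 < f a ξ} <
        sInf {a | a ∈ As s ∧ abar < a} := by
      calc sInf {a | a ∈ As s ∧ f (bnd abar) ξ + 1 < f a ξ} < ag (f (bnd abar) ξ + 1) := hsd
      _ ≤ sSup (ag '' Set.Iio (μs ξ).ord) :=
        le_csSup ⟨lamo, by rintro _ ⟨γ, _, rfl⟩; exact (hag1 γ).le⟩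
          (Set.mem_image_of_mem ag hγb)
      _ < sSup (ag '' Set.Iio (μs ξ).ord) + 1 := lt_add_one _
      _ ≤ abar := habar1
      _ < sInf {a | a ∈ As s ∧ abar < a} := hccm.2
    have hmono := hAmono s hs4 _ hddm.1 _ hccm.1 hchain ξ hξ0 hξκ
    have hlast : f (sInf {a | a ∈ As s ∧ abar < a}) ξ < f (bnd abar) ξ :=
      htail ξ (by rw [habar3]; exact hξ1) hξκ
    have hfinal : f (bnd abar) ξ + 1 < f (bnd abar) ξ :=
      lt_trans (lt_trans hddm.2 hmono) hlast
    exact absurd hfinal (not_lt.2 (lt_add_one _).le)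
  -- package the claim for choice
  have hclaim' : ∀ ξ, ∃ γ, ((ζ0 ≤ ξ ∧ z1 ≤ ξ ∧ ξ < κ.ord) →
      (γ < (μs ξ).ord ∧ {s ∈ X | sSup ((fun a => f a ξ) '' As s) ≤ γ} ∈ U)) := by
    intro ξ
    by_cases hcond : ζ0 ≤ ξ ∧ z1 ≤ ξ ∧ ξ < κ.ord
    · obtain ⟨γ, h1, h2⟩ := hclaim ξ hcond.1 hcond.2.1 hcond.2.2
      exact ⟨γ, fun _ => ⟨h1, h2⟩⟩
    · exact ⟨0, fun h => absurd h hcond⟩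
  choose gsel hgsel using hclaim'
  have hγfun : ∀ ξ < κ.ord,
      (if ζ0 ≤ ξ ∧ z1 ≤ ξ ∧ ξ < κ.ord then gsel ξ + 1 else 0) < (μs ξ).ord := by
    intro ξ hξ
    by_cases hcond : ζ0 ≤ ξ ∧ z1 ≤ ξ ∧ ξ < κ.ord
    · rw [if_pos hcond]
      have h1 := (hgsel ξ hcond).1
      have h2 := (Cardinal.isSuccLimit_ord (hreg ξ hξ).1).succ_lt h1
      rwa [← Ordinal.add_one_eq_succ] at h2
    · rw [if_neg hcond]
      exact (Cardinal.isSuccLimit_ord (hreg ξ hξ).1).pos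
  obtain ⟨astar, hastar, z3, hz3, hdom⟩ := hcofinal _ hγfun
  have hstar : ∀ s, ∃ z, z < κ.ord ∧ ((s ∈ E4 ∧ astar < sSup s) → ∀ ξ, z ≤ ξ → ξ < κ.ord →
      f astar ξ < f (sInf {a | a ∈ As s ∧ astar < a}) ξ) := by
    intro s
    by_cases hcond : s ∈ E4 ∧ astar < sSup s
    · have hccm := hccp astar s hcond.1 hcond.2
      have hlt2 : sInf {a | a ∈ As s ∧ astar < a} < lamo :=
        lt_trans (hAsub s hcond.1 hccm.1) (hsupX s (hE4X s hcond.1))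
      obtain ⟨z, hz, ht⟩ := hincf astar _ hccm.2 hlt2
      exact ⟨z, hz, fun _ => ht⟩
    · exact ⟨0, hκord.pos, fun h => absurd h hcond⟩
  choose zt2 hzt2a hzt2b using hstar
  obtain ⟨z4, hz4, hZ4⟩ := scw_pressLt hU hchiinf hκχl hU.2.1 (fun s _ => hzt2a s)
  set ξ0 := max (max ζ0 z1) (max z3 z4) with hξ0def
  have hξ0κ : ξ0 < κ.ord := max_lt (max_lt hζ0 hz1) (max_lt hz3 hz4)
  have hcond0 : ζ0 ≤ ξ0 ∧ z1 ≤ ξ0 ∧ ξ0 < κ.ord :=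
    ⟨le_trans (le_max_left _ _) (le_max_left _ _),
      le_trans (le_max_right _ _) (le_max_left _ _), hξ0κ⟩
  obtain ⟨hg1, hg2⟩ := hgsel ξ0 hcond0
  have hd0 : gsel ξ0 + 1 < f astar ξ0 := by
    have h1 := hdom ξ0 (le_trans (le_max_left _ _) (le_max_right _ _)) hξ0κ
    rwa [if_pos hcond0] at h1
  obtain ⟨s, ⟨⟨hsXB, hsB⟩, ⟨hs4, hsXα, hsα⟩⟩, hsXz, hsz⟩ := scw_nonempty hU
    (scw_inter hU hchiinf
      (scw_inter hU hchiinf hg2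
        (scw_inter hU hchiinf hE4 (scw_lt_sup hU hllim hastar))) hZ4)
  have hccm := hccp astar s hs4 hsα
  have htail := hzt2b s ⟨hs4, hsα⟩ ξ0
    (by rw [hsz]; exact le_trans (le_max_right _ _) (le_max_right _ _)) hξ0κ
  have hmem := hmemg s hs4 ξ0 hξ0κ _ hccm.1
  have hlt3 : f astar ξ0 < gsel ξ0 := lt_of_lt_of_le (lt_of_lt_of_le htail hmem) hsB
  exact absurd (lt_trans (lt_trans hlt3 (lt_add_one _)) hd0) (lt_irrefl _)
end

section
/- Let ⟨f_β : β < α⟩ be a <*-increasing sequence in ∏_{ξ<κ} μ_ξ with an exact upper bound g such that cf(g(ξ)) = cf(α) for all sufficiently large ξ < κ, where cf(α) > κ. Then α is a good point: there exist an unbounded A ⊆ α and ζ < κ such that f_β(ξ) < f_γ(ξ) for all β < γ in A and all ξ ≥ ζ. -/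
open Cardinal Set

/-- `h` is eventually strictly below `g` on indices `< κo`. -/
def EvLt (κo : Ordinal) (h g : Ordinal → Ordinal) : Prop :=
  ∃ ζ < κo, ∀ ξ, ζ ≤ ξ → ξ < κo → h ξ < g ξ

/-- Transfinite recursion used to build a chain of indices. -/
noncomputable def ordChain (G : ∀ ρ : Ordinal, (∀ ρ' < ρ, Ordinal) → Ordinal) :
    Ordinal → Ordinal :=
  Ordinal.lt_wf.fix G

theorem ordChain_eq (G : ∀ ρ : Ordinal, (∀ ρ' < ρ, Ordinal) → Ordinal) (ρ : Ordinal) :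
    ordChain G ρ = G ρ (fun ρ' _ => ordChain G ρ') :=
  Ordinal.lt_wf.fix_eq G ρ

/-- If `⟨f_β : β < α⟩` is `<*`-increasing in `∏_{ξ<κ} μ_ξ` with an exact upper bound
`g` such that `cf (g ξ) = cf α` for all sufficiently large `ξ < κ`, and `cf α > κ`,
then `α` is a good point. -/
theorem stmt16 (κ : Cardinal) (hκ : κ.IsRegular) (α : Ordinal)
    (μs : Ordinal → Cardinal) (f : Ordinal → Ordinal → Ordinal)
    (g : Ordinal → Ordinal)
    (hf : ∀ β < α, ∀ ξ < κ.ord, f β ξ < (μs ξ).ord)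
    (hg : ∀ ξ < κ.ord, g ξ < (μs ξ).ord)
    (hinc : ∀ β γ : Ordinal, β < γ → γ < α → EvLt κ.ord (f β) (f γ))
    (hub : ∀ β < α, EvLt κ.ord (f β) g)
    (hexact : ∀ h : Ordinal → Ordinal, (∀ ξ < κ.ord, h ξ < (μs ξ).ord) →
      EvLt κ.ord h g → ∃ β < α, EvLt κ.ord h (f β))
    (hcofg : ∃ ζ < κ.ord, ∀ ξ, ζ ≤ ξ → ξ < κ.ord → (g ξ).cof = α.cof)
    (hcofα : κ < α.cof) :
    GoodPt f κ.ord α := by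
  classical
  obtain ⟨ζ₀, hζ₀κ, hcof⟩ := hcofg
  -- basic facts
  have hℵκ : ℵ₀ ≤ κ := hκ.1
  have hAlefL : ℵ₀ ≤ α.cof := hℵκ.trans hcofα.le
  have hαlim : Order.IsSuccLimit α := by
    rcases Ordinal.zero_or_succ_or_isSuccLimit α with h | ⟨a, rfl⟩ | h
    · rw [h, Ordinal.cof_zero] at hcofα
      exact absurd hcofα (κ.zero_le).not_gt
    · rw [Ordinal.cof_succ] at hcofα
      have h1 : (ℵ₀ : Cardinal) < 1 := hℵκ.trans_lt hcofα
      exact absurd (Cardinal.lt_one_iff_zero.1 h1) Cardinal.aleph0_ne_zero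
    · exact h
  have hreg : (α.cof).IsRegular := Cardinal.isRegular_cof hαlim
  set lamo := (α.cof).ord with hlamo
  have hcoflamo : lamo.cof = α.cof := hreg.cof_eq
  have hlamolim : Order.IsSuccLimit lamo := Cardinal.isSuccLimit_ord hAlefL
  have hκolim : Order.IsSuccLimit κ.ord := Cardinal.isSuccLimit_ord hℵκ
  have h0lamo : (0 : Ordinal) < lamo := hlamolim.pos
  have hκoκ : κ.ord.card = κ := Cardinal.card_ord κ
  have hcardlt : ∀ ρ, ρ < lamo → ρ.card < α.cof := fun ρ h => Cardinal.lt_ord.1 h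
  have hμpos : ∀ ξ, ξ < κ.ord → 0 < (μs ξ).ord :=
    fun ξ hξ => (zero_le (a := f 0 ξ)).trans_lt (hf 0 hαlim.pos ξ hξ)
  -- cofinal witnesses inside each g ξ
  have hwex : ∀ ξ, ∃ w : Ordinal → Ordinal, ζ₀ ≤ ξ → ξ < κ.ord →
      (∀ i < lamo, w i < g ξ) ∧ (∀ x < g ξ, ∃ i < lamo, x < w i) := by
    intro ξ
    by_cases hgood : ζ₀ ≤ ξ ∧ ξ < κ.ord
    · obtain ⟨hξ1, hξ2⟩ := hgood
      have hc : (g ξ).cof = α.cof := hcof ξ hξ1 hξ2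
      obtain ⟨w₀, hw₀⟩ := Ordinal.exists_blsub_cof (g ξ)
      have hco : ((g ξ).cof).ord = lamo := by rw [hc]
      refine ⟨fun j => if h : j < ((g ξ).cof).ord then w₀ j h else 0, fun _ _ => ⟨?_, ?_⟩⟩
      · intro i hi
        have hi' : i < ((g ξ).cof).ord := hco ▸ hi
        show (if h : i < ((g ξ).cof).ord then w₀ i h else 0) < g ξ
        rw [dif_pos hi']
        exact hw₀ ▸ Ordinal.lt_blsub _ i hi'
      · intro x hx
        have hsle : Order.succ x ≤ g ξ := Order.succ_le_of_lt hx
        rcases lt_or_eq_of_le hsle with hs | hs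
        · rw [← hw₀] at hs
          obtain ⟨i, hi, hxi⟩ := Ordinal.lt_blsub_iff.1 hs
          refine ⟨i, hco ▸ hi, ?_⟩
          show x < (if h : i < ((g ξ).cof).ord then w₀ i h else 0)
          rw [dif_pos hi]
          exact Order.succ_le_iff.1 hxi
        · exfalso
          rw [← hs, Ordinal.cof_succ] at hc
          have h1 : (ℵ₀ : Cardinal) ≤ 1 := hc ▸ hAlefL
          exact absurd (Cardinal.one_lt_aleph0.trans_le h1) (lt_irrefl _)
    · exact ⟨fun _ => 0, fun h1 h2 => absurd ⟨h1, h2⟩ hgood⟩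
  choose w hw using hwex
  -- the monotonized cofinal sequences
  set e : Ordinal → Ordinal → Ordinal :=
    fun ξ i => Ordinal.bsup (Order.succ i) (fun j _ => w ξ j) with he
  have he_mono : ∀ ξ {i i' : Ordinal}, i ≤ i' → e ξ i ≤ e ξ i' := by
    intro ξ i i' hii
    refine Ordinal.bsup_le_iff.2 fun j hj => ?_
    exact Ordinal.le_bsup _ j (hj.trans_le (Order.succ_le_succ hii))
  have he_lt : ∀ ξ, ζ₀ ≤ ξ → ξ < κ.ord → ∀ i < lamo, e ξ i < g ξ := by
    intro ξ h1 h2 i hi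
    have hc : (g ξ).cof = α.cof := hcof ξ h1 h2
    refine Ordinal.bsup_lt_ord ?_ ?_
    · rw [hc]
      exact hcardlt _ (hlamolim.succ_lt hi)
    · intro j hj
      exact (hw ξ h1 h2).1 j ((Order.lt_succ_iff.1 hj).trans_lt hi)
  -- eventual domination witness for each f β below g
  have hζuex : ∀ β, ∃ ζ, ζ < κ.ord ∧
      (β < α → ∀ ξ, ζ ≤ ξ → ξ < κ.ord → f β ξ < g ξ) := by
    intro β
    by_cases hβ : β < α
    · obtain ⟨ζ, hζ, hh⟩ := hub β hβ
      exact ⟨ζ, hζ, fun _ => hh⟩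
    · exact ⟨0, hκolim.pos, fun h => absurd h hβ⟩
  choose ζu hζu1 hζu2 using hζuex
  -- for each β < α, a level iOf β < lamo with f β eventually below e · (iOf β)
  have hiOfex : ∀ β, ∃ i, i < lamo ∧
      (β < α → ∀ ξ, max ζ₀ (ζu β) ≤ ξ → ξ < κ.ord → f β ξ < e ξ i) := by
    intro β
    by_cases hβ : β < α
    · have hjex : ∀ ξ, ∃ j, j < lamo ∧
          (max ζ₀ (ζu β) ≤ ξ → ξ < κ.ord → f β ξ < w ξ j) := by
        intro ξ
        by_cases hgd : max ζ₀ (ζu β) ≤ ξ ∧ ξ < κ.ord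
        · obtain ⟨hgd1, hgd2⟩ := hgd
          have h1 : ζ₀ ≤ ξ := le_trans (le_max_left _ _) hgd1
          have hfg : f β ξ < g ξ := hζu2 β hβ ξ (le_trans (le_max_right _ _) hgd1) hgd2
          obtain ⟨j, hj, hja⟩ := (hw ξ h1 hgd2).2 _ hfg
          exact ⟨j, hj, fun _ _ => hja⟩
        · exact ⟨0, h0lamo, fun a b => absurd ⟨a, b⟩ hgd⟩
      choose jf hjf1 hjf2 using hjex
      refine ⟨Ordinal.bsup κ.ord (fun ξ _ => jf ξ), ?_, ?_⟩
      · refine Ordinal.bsup_lt_ord ?_ (fun ξ _ => hjf1 ξ)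
        rw [hcoflamo, hκoκ]
        exact hcofα
      · intro _ ξ hξ1 hξ2
        refine (hjf2 ξ hξ1 hξ2).trans_le ?_
        exact Ordinal.le_bsup (fun j _ => w ξ j) (jf ξ)
          (Order.lt_succ_iff.2 (Ordinal.le_bsup _ ξ hξ2))
    · exact ⟨0, h0lamo, fun h => absurd h hβ⟩
  choose iOf hiOf1 hiOf2 using hiOfex
  -- the auxiliary functions h_i
  set hfun : Ordinal → Ordinal → Ordinal :=
    fun i ξ => if ζ₀ ≤ ξ ∧ ξ < κ.ord then e ξ i else 0 with hhfun
  have hhfun_eq : ∀ i ξ, ζ₀ ≤ ξ → ξ < κ.ord → hfun i ξ = e ξ i := by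
    intro i ξ h1 h2
    simp only [hhfun, if_pos (⟨h1, h2⟩ : ζ₀ ≤ ξ ∧ ξ < κ.ord)]
  -- for each i < lamo, a β = bOf i with h_i eventually below f (bOf i)
  have hbOfex : ∀ i, ∃ β, β < α ∧ (i < lamo → EvLt κ.ord (hfun i) (f β)) := by
    intro i
    by_cases hi : i < lamo
    · have hdom : ∀ ξ < κ.ord, hfun i ξ < (μs ξ).ord := by
        intro ξ hξ
        by_cases hξ0 : ζ₀ ≤ ξ
        · rw [hhfun_eq i ξ hξ0 hξ]
          exact (he_lt ξ hξ0 hξ i hi).trans (hg ξ hξ)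
        · have h0 : hfun i ξ = 0 := by
            simp only [hhfun]
            exact if_neg (fun hc : ζ₀ ≤ ξ ∧ ξ < κ.ord => hξ0 hc.1)
          rw [h0]
          exact hμpos ξ hξ
      have hev0 : EvLt κ.ord (hfun i) g := by
        refine ⟨ζ₀, hζ₀κ, fun ξ h1 h2 => ?_⟩
        rw [hhfun_eq i ξ h1 h2]
        exact he_lt ξ h1 h2 i hi
      obtain ⟨β, hβ, hev⟩ := hexact (hfun i) hdom hev0
      exact ⟨β, hβ, fun _ => hev⟩
    · exact ⟨0, hαlim.pos, fun h => absurd h hi⟩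
  choose bOf hbOf1 hbOf2 using hbOfex
  have hζbex : ∀ i, ∃ ζ, ζ < κ.ord ∧
      (i < lamo → ∀ ξ, ζ ≤ ξ → ξ < κ.ord → hfun i ξ < f (bOf i) ξ) := by
    intro i
    by_cases hi : i < lamo
    · obtain ⟨ζ, h1, h2⟩ := hbOf2 i hi
      exact ⟨ζ, h1, fun _ => h2⟩
    · exact ⟨0, hκolim.pos, fun h => absurd h hi⟩
  choose ζb hζb1 hζb2 using hζbex
  -- pigeonhole: a single witness ζI occurring unboundedly often
  set v : Ordinal → Ordinal := fun i => max (ζb i) (max ζ₀ (ζu (bOf i))) with hv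
  have hvκ : ∀ i, v i < κ.ord := fun i => max_lt (hζb1 i) (max_lt hζ₀κ (hζu1 _))
  have hpi : ∃ ζI, ζI < κ.ord ∧ ∀ i₀, i₀ < lamo → ∃ i, i₀ ≤ i ∧ i < lamo ∧ v i = ζI := by
    by_contra hcon
    push_neg at hcon
    have hbex : ∀ ζ, ∃ i₀, i₀ < lamo ∧
        (ζ < κ.ord → ∀ i, i₀ ≤ i → i < lamo → v i ≠ ζ) := by
      intro ζ
      by_cases hζ : ζ < κ.ord
      · obtain ⟨i₀, hi₀, hh⟩ := hcon ζ hζ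
        exact ⟨i₀, hi₀, fun _ => hh⟩
      · exact ⟨0, h0lamo, fun h => absurd h hζ⟩
    choose bnd hbnd1 hbnd2 using hbex
    have hB : Ordinal.bsup κ.ord (fun ζ _ => bnd ζ) < lamo := by
      refine Ordinal.bsup_lt_ord ?_ (fun ζ _ => hbnd1 ζ)
      rw [hcoflamo, hκoκ]
      exact hcofα
    exact hbnd2 _ (hvκ _) _ (Ordinal.le_bsup (fun ζ _ => bnd ζ) _ (hvκ _)) hB rfl
  obtain ⟨ζI, hζIκ, hpi⟩ := hpi
  -- the recursively constructed chain of indices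
  set G : ∀ ρ : Ordinal, (∀ ρ' < ρ, Ordinal) → Ordinal := fun ρ prev =>
    if h : ∃ i, i < lamo ∧ v i = ζI ∧
        ∀ ρ' (hρ' : ρ' < ρ), prev ρ' hρ' < i ∧ iOf (bOf (prev ρ' hρ')) < i
    then h.choose else 0 with hG
  set t := ordChain G with ht
  have hteq : ∀ ρ, t ρ = G ρ (fun ρ' _ => t ρ') := fun ρ => ordChain_eq G ρ
  have htprop : ∀ ρ, ρ < lamo → t ρ < lamo ∧ v (t ρ) = ζI ∧
      ∀ ρ', ρ' < ρ → t ρ' < t ρ ∧ iOf (bOf (t ρ')) < t ρ := by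
    intro ρ
    induction ρ using Ordinal.induction with
    | _ ρ IH =>
      intro hρ
      have hex : ∃ i, i < lamo ∧ v i = ζI ∧
          ∀ ρ' (hρ' : ρ' < ρ), t ρ' < i ∧ iOf (bOf (t ρ')) < i := by
        have hBlt : Ordinal.bsup ρ
            (fun ρ' _ => Order.succ (max (t ρ') (iOf (bOf (t ρ'))))) < lamo := by
          refine Ordinal.bsup_lt_ord ?_ ?_
          · rw [hcoflamo]
            exact hcardlt ρ hρ
          · intro ρ' hρ'
            refine hlamolim.succ_lt (max_lt ?_ (hiOf1 _))
            exact (IH ρ' hρ' (hρ'.trans hρ)).1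
        obtain ⟨i, hi0, hilam, hvi⟩ := hpi _ hBlt
        refine ⟨i, hilam, hvi, fun ρ' hρ' => ?_⟩
        have h1 : Order.succ (max (t ρ') (iOf (bOf (t ρ')))) ≤ i :=
          le_trans (Ordinal.le_bsup _ ρ' hρ') hi0
        have h2 : max (t ρ') (iOf (bOf (t ρ'))) < i := Order.succ_le_iff.1 h1
        exact ⟨(le_max_left _ _).trans_lt h2, (le_max_right _ _).trans_lt h2⟩
      rw [hteq ρ]
      simp only [hG]
      rw [dif_pos hex]
      exact hex.choose_spec
  have htge : ∀ ρ, ρ < lamo → ρ ≤ t ρ := by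
    intro ρ
    induction ρ using Ordinal.induction with
    | _ ρ IH =>
      intro hρ
      by_contra hcon
      push_neg at hcon
      have h1 : t ρ ≤ t (t ρ) := IH (t ρ) hcon ((htprop ρ hρ).1)
      have h2 : t (t ρ) < t ρ := ((htprop ρ hρ).2.2 (t ρ) hcon).1
      exact absurd (h1.trans_lt h2) (lt_irrefl _)
  -- key comparison lemma
  have Lcmp : ∀ β, β < α → ∀ i, i < lamo → v i = ζI → iOf β < i →
      ∀ ξ, max ζ₀ (ζu β) ≤ ξ → max ζ₀ ζI ≤ ξ → ξ < κ.ord → f β ξ < f (bOf i) ξ := by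
    intro β hβ i hilam hvi hio ξ hξ2 hξ1 hξκ
    have hz0 : ζ₀ ≤ ξ := le_trans (le_max_left _ _) hξ1
    have h1 : f β ξ < e ξ (iOf β) := hiOf2 β hβ ξ hξ2 hξκ
    have h2 : e ξ (iOf β) ≤ e ξ i := he_mono ξ hio.le
    have hζbξ : ζb i ≤ ξ := by
      calc ζb i ≤ v i := le_max_left _ _
      _ = ζI := hvi
      _ ≤ ξ := le_trans (le_max_right _ _) hξ1
    have h3 : hfun i ξ < f (bOf i) ξ := hζb2 i hilam ξ hζbξ hξκ
    rw [hhfun_eq i ξ hz0 hξκ] at h3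
    exact (h1.trans_le h2).trans h3
  -- ordering lemma
  have Lord : ∀ β, β < α → ∀ i, i < lamo → v i = ζI → iOf β < i → β < bOf i := by
    intro β hβ i hilam hvi hio
    rcases lt_trichotomy β (bOf i) with h | h | h
    · exact h
    · exfalso
      have hξκ : max (max ζ₀ (ζu β)) (max ζ₀ ζI) < κ.ord :=
        max_lt (max_lt hζ₀κ (hζu1 β)) (max_lt hζ₀κ hζIκ)
      have := Lcmp β hβ i hilam hvi hio _ (le_max_left _ _) (le_max_right _ _) hξκ
      rw [← h] at this
      exact absurd this (lt_irrefl _)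
    · exfalso
      obtain ⟨ζ', hζ', hev⟩ := hinc (bOf i) β h hβ
      have hξκ : max (max (max ζ₀ (ζu β)) (max ζ₀ ζI)) ζ' < κ.ord :=
        max_lt (max_lt (max_lt hζ₀κ (hζu1 β)) (max_lt hζ₀κ hζIκ)) hζ'
      have h1 := Lcmp β hβ i hilam hvi hio _
        (le_trans (le_max_left _ _) (le_max_left _ _))
        (le_trans (le_max_right _ _) (le_max_left _ _)) hξκ
      have h2 := hev _ (le_max_right _ _) hξκ
      exact absurd (h1.trans h2) (lt_irrefl _)
  -- assemble the good set
  refine ⟨{b | ∃ ρ, ρ < lamo ∧ b = bOf (t ρ)}, ?_, ?_, max ζ₀ ζI, max_lt hζ₀κ hζIκ, ?_⟩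
  · rintro b ⟨ρ, hρ, rfl⟩
    exact hbOf1 _
  · intro b hb
    have hrholam : Order.succ (iOf b) < lamo := hlamolim.succ_lt (hiOf1 b)
    have h1 : iOf b < t (Order.succ (iOf b)) :=
      (Order.lt_succ _).trans_le (htge _ hrholam)
    refine ⟨bOf (t (Order.succ (iOf b))), ⟨_, hrholam, rfl⟩, ?_⟩
    exact Lord b hb _ ((htprop _ hrholam).1) ((htprop _ hrholam).2.1) h1
  · rintro β ⟨ρ, hρ, rfl⟩ γ ⟨σ, hσ, rfl⟩ hβγ ξ hξ hξκ
    have hρσ : ρ < σ := by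
      rcases lt_trichotomy ρ σ with h | h | h
      · exact h
      · exfalso
        rw [h] at hβγ
        exact absurd hβγ (lt_irrefl _)
      · exfalso
        have h1 : iOf (bOf (t σ)) < t ρ := ((htprop ρ hρ).2.2 σ h).2
        have h2 := Lord (bOf (t σ)) (hbOf1 _) (t ρ) ((htprop ρ hρ).1)
          ((htprop ρ hρ).2.1) h1
        exact absurd (hβγ.trans h2) (lt_irrefl _)
    have h1 : iOf (bOf (t ρ)) < t σ := ((htprop σ hσ).2.2 ρ hρσ).2
    refine Lcmp (bOf (t ρ)) (hbOf1 _) (t σ) ((htprop σ hσ).1)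
      ((htprop σ hσ).2.1) h1 ξ ?_ hξ hξκ
    have hζu' : ζu (bOf (t ρ)) ≤ ζI := by
      calc ζu (bOf (t ρ)) ≤ max ζ₀ (ζu (bOf (t ρ))) := le_max_right _ _
      _ ≤ v (t ρ) := le_max_right _ _
      _ = ζI := (htprop ρ hρ).2.1
    exact max_le (le_trans (le_max_left _ _) hξ)
      (hζu'.trans (le_trans (le_max_right _ _) hξ))
end
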